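/- arXiv:2009.06839 — 5 statements merged into one kernel-verified Lean document; each statement's English description precedes it below -/
import Mathlib

section
/- Let μ be a Borel probability measure on ℝ with compact support, and let E₋ and E₊ denote the infimum and supremum of supp μ. Let r > 0 with r ≥ 4(E₊ − E₋), let z₀ ∈ ℂ with dist(z₀, supp μ) ≥ r, set u := G_μ(z₀), and let z₁ ∈ ℂ ∖ supp μ satisfy |z₁ − x| ≤ r/4 for every x ∈ supp μ. Then Re(u·z₁) − ∫ log|z₁ − x| dμ(x) > Re(u·z₀) − ∫ log|z₀ − x| dμ(x). -/
open MeasureTheory Filter Topology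

noncomputable section

/-- The (topological) support of a measure on `ℝ`: the set of points all of whose open
neighborhoods have positive measure. -/
def msupp (μ : Measure ℝ) : Set ℝ :=
  {x : ℝ | ∀ U : Set ℝ, IsOpen U → x ∈ U → 0 < μ U}

/-- Almost every point lies in `msupp μ`. -/
lemma ae_mem_msupp (μ : Measure ℝ) : ∀ᵐ x ∂μ, x ∈ msupp μ := by
  set 𝒰 : Set (Set ℝ) := {U | IsOpen U ∧ μ U = 0} with h𝒰
  have hcover : (msupp μ)ᶜ = ⋃₀ 𝒰 := by
    ext x
    simp only [Set.mem_compl_iff, msupp, Set.mem_setOf_eq, Set.mem_sUnion, not_forall]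
    constructor
    · rintro ⟨U, hU, hxU, hpos⟩
      exact ⟨U, ⟨hU, by simpa [pos_iff_ne_zero] using hpos⟩, hxU⟩
    · rintro ⟨U, ⟨hU, hU0⟩, hxU⟩
      exact ⟨U, hU, hxU, by simp [hU0]⟩
  obtain ⟨T, hTc, hTsub, hTU⟩ := TopologicalSpace.isOpen_sUnion_countable 𝒰 (fun s hs => hs.1)
  have : μ ((msupp μ)ᶜ) = 0 := by
    rw [hcover, ← hTU]
    exact (measure_sUnion_null_iff hTc).2 fun s hs => (hTsub hs).2
  exact this

lemma key_pt (r : ℝ) (hr : 0 < r) (a b : ℂ) (ha : r ≤ ‖a‖)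
    (hb : ‖b‖ ≤ r / 4) (hb0 : b ≠ 0) :
    2 * Real.log 2 - 5/4 ≤ ((b - a) * a⁻¹).re + Real.log (‖a‖) - Real.log (‖b‖) := by
  have ha0 : (0:ℝ) < ‖a‖ := lt_of_lt_of_le hr ha
  have hane : a ≠ 0 := by simpa using ha0.ne'
  have hb0' : (0:ℝ) < ‖b‖ := by simpa using hb0
  have h1 : ((b - a) * a⁻¹).re = (b * a⁻¹).re - 1 := by
    have : (b - a) * a⁻¹ = b * a⁻¹ - 1 := by field_simp
    rw [this, Complex.sub_re, Complex.one_re]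
  have h2 : -(1/4 : ℝ) ≤ (b * a⁻¹).re := by
    have habs : ‖b * a⁻¹‖ ≤ 1/4 := by
      rw [norm_mul, norm_inv]
      calc ‖b‖ * (‖a‖)⁻¹ ≤ (r/4) * (‖a‖)⁻¹ := by
            apply mul_le_mul_of_nonneg_right hb (by positivity)
        _ ≤ (r/4) * r⁻¹ := by
            apply mul_le_mul_of_nonneg_left _ (by positivity)
            exact inv_anti₀ hr ha
        _ = 1/4 := by field_simp
    have := neg_abs_le (b * a⁻¹).re
    have h3 := Complex.abs_re_le_norm (b * a⁻¹)
    linarith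
  have h4 : Real.log r ≤ Real.log (‖a‖) := Real.log_le_log hr ha
  have h5 : Real.log (‖b‖) ≤ Real.log r - Real.log 4 := by
    have := Real.log_le_log hb0' hb
    rwa [Real.log_div hr.ne' (by norm_num)] at this
  have h6 : Real.log 4 = 2 * Real.log 2 := by
    rw [show (4:ℝ) = 2^2 by norm_num, Real.log_pow]; push_cast; ring
  linarith

/-- Let `μ` be a compactly supported probability measure on `ℝ`,
`r ≥ 4(E₊ − E₋)`, `z₀ ∈ ℂ` with `dist(z₀, supp μ) ≥ r`, `u := G_μ(z₀)`, and
`z₁ ∈ ℂ ∖ supp μ` with `|z₁ − x| ≤ r/4` for every `x ∈ supp μ`.  Then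
`Re(u z₁) − ∫ log|z₁ − x| dμ(x) > Re(u z₀) − ∫ log|z₀ − x| dμ(x)`. -/
theorem statement14 (μ : Measure ℝ) [IsProbabilityMeasure μ]
    (hcompact : IsCompact (msupp μ))
    (r : ℝ) (hr : 0 < r) (hr4 : 4 * (sSup (msupp μ) - sInf (msupp μ)) ≤ r)
    (z₀ : ℂ) (hz₀ : r ≤ Metric.infDist z₀ ((fun x : ℝ => (x : ℂ)) '' msupp μ))
    (z₁ : ℂ) (hz₁ : z₁ ∉ (fun x : ℝ => (x : ℂ)) '' msupp μ)
    (hz₁close : ∀ x ∈ msupp μ, ‖z₁ - (x : ℂ)‖ ≤ r / 4) :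
    let u : ℂ := ∫ x, (z₀ - (x : ℂ))⁻¹ ∂μ
    (u * z₀).re - (∫ x, Real.log (‖z₀ - (x : ℂ)‖) ∂μ) <
      (u * z₁).re - ∫ x, Real.log (‖z₁ - (x : ℂ)‖) ∂μ := by
  intro u
  have hae : ∀ᵐ x ∂μ, x ∈ msupp μ := ae_mem_msupp μ
  have hrestr : μ.restrict (msupp μ) = μ := Measure.restrict_eq_self_of_ae_mem hae
  have hz0abs : ∀ x ∈ msupp μ, r ≤ ‖z₀ - x‖ := by
    intro x hx
    have hmem : (x:ℂ) ∈ (fun x : ℝ => (x : ℂ)) '' msupp μ := ⟨x, hx, rfl⟩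
    have h := Metric.infDist_le_dist_of_mem (x := z₀) hmem
    rw [Complex.dist_eq] at h
    exact le_trans hz₀ h
  have hz0ne : ∀ x ∈ msupp μ, (z₀ - (x:ℂ)) ≠ 0 := by
    intro x hx
    have := hz0abs x hx
    intro h; rw [h] at this; simp at this; linarith
  have hz1ne : ∀ x ∈ msupp μ, (z₁ - (x:ℂ)) ≠ 0 := by
    intro x hx h
    exact hz₁ ⟨x, hx, by linear_combination -h⟩
  -- integrability
  have hg : Integrable (fun x : ℝ => ((z₀ - x)⁻¹ : ℂ)) μ := by
    rw [← hrestr]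
    exact ContinuousOn.integrableOn_compact hcompact
      (((continuous_const.sub Complex.continuous_ofReal).continuousOn).inv₀ hz0ne)
  have hlog : ∀ z : ℂ, (∀ x ∈ msupp μ, (z - (x:ℂ)) ≠ 0) →
      Integrable (fun x : ℝ => Real.log (‖z - x‖)) μ := by
    intro z hz
    rw [← hrestr]
    apply ContinuousOn.integrableOn_compact hcompact
    apply continuousOn_of_forall_continuousAt
    intro x hx
    have habs : ContinuousAt (fun x : ℝ => ‖z - x‖) x :=
      (continuous_norm.comp (continuous_const.sub Complex.continuous_ofReal)).continuousAt
    have hlogc : ContinuousAt Real.log (‖z - x‖) :=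
      Real.continuousAt_log (norm_ne_zero_iff.mpr (hz x hx))
    exact ContinuousAt.comp (x := x) (g := Real.log)
      (f := fun x : ℝ => ‖z - x‖) hlogc habs
  have hlog0 := hlog z₀ hz0ne
  have hlog1 := hlog z₁ hz1ne
  have hgc : Integrable (fun x : ℝ => ((z₀ - x)⁻¹ * (z₁ - z₀) : ℂ)) μ := hg.mul_const _
  -- rewrite re-difference as an integral
  have h1 : (u * z₁).re - (u * z₀).re = ∫ x, ((z₀ - (x:ℂ))⁻¹ * (z₁ - z₀)).re ∂μ := by
    have hcc := Complex.reCLM.integral_comp_comm hgc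
    simp only [Complex.reCLM_apply] at hcc
    rw [hcc, integral_mul_const]
    show _ = (u * (z₁ - z₀)).re
    rw [mul_sub, Complex.sub_re]
  -- positivity of the combined integral
  set F : ℝ → ℝ := fun x =>
    ((z₀ - (x:ℂ))⁻¹ * (z₁ - z₀)).re +
      (Real.log (‖z₀ - x‖) - Real.log (‖z₁ - x‖)) with hF
  have hF_int : Integrable F μ := hgc.re.add (hlog0.sub hlog1)
  have hpt : ∀ᵐ x ∂μ, 2 * Real.log 2 - 5/4 ≤ F x := by
    filter_upwards [hae] with x hx
    have key := key_pt r hr (z₀ - x) (z₁ - x) (hz0abs x hx) (hz₁close x hx)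
      (hz1ne x hx)
    have hrw : ((z₁ - x) - (z₀ - x)) * (z₀ - (x:ℂ))⁻¹ = (z₀ - (x:ℂ))⁻¹ * (z₁ - z₀) := by
      ring
    rw [hrw] at key
    simp only [hF]
    linarith
  have hlow : (2 * Real.log 2 - 5/4 : ℝ) ≤ ∫ x, F x ∂μ := by
    have := integral_mono_ae (integrable_const (2 * Real.log 2 - 5/4)) hF_int hpt
    simpa [measure_univ] using this
  have hpos : (0:ℝ) < ∫ x, F x ∂μ := by
    have := Real.log_two_gt_d9
    linarith
  have hsplit : ∫ x, F x ∂μ = (∫ x, ((z₀ - (x:ℂ))⁻¹ * (z₁ - z₀)).re ∂μ) +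
      ((∫ x, Real.log (‖z₀ - x‖) ∂μ) - ∫ x, Real.log (‖z₁ - x‖) ∂μ) := by
    have e1 : ∫ x, F x ∂μ = (∫ x, ((z₀ - (x:ℂ))⁻¹ * (z₁ - z₀)).re ∂μ) +
        ∫ x, (Real.log (‖z₀ - x‖) - Real.log (‖z₁ - x‖)) ∂μ :=
      integral_add hgc.re (hlog0.sub hlog1)
    have e2 : ∫ x, (Real.log (‖z₀ - (x:ℝ)‖) - Real.log (‖z₁ - x‖)) ∂μ =
        (∫ x, Real.log (‖z₀ - x‖) ∂μ) - ∫ x, Real.log (‖z₁ - x‖) ∂μ :=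
      integral_sub hlog0 hlog1
    rw [e1, e2]
  rw [hsplit, ← h1] at hpos
  linarith
end
end

section
/- Let μ be a Borel probability measure on ℝ with compact support, not a single point mass, let E₋ and E₊ denote the infimum and supremum of supp μ, and set x₀ := E₊ + 4(E₊ − E₋). Write G(z) := ∫ (z − x)^{−1} dμ(x) and G′(z) := −∫ (z − x)^{−2} dμ(x) for real z > E₊. The quantity 1 + G(x₀)²/G′(x₀) lies in (0, 1); set τ := (1 + G(x₀)²/G′(x₀))^{−1}. Then for every natural number n with n ≥ τ: there exists a unique ξ ∈ (E₊, ∞) such that n·G(ξ)² + (n − 1)·G′(ξ) = 0; moreover ξ ≥ x₀ (equivalently ξ − E₊ ≥ 4(E₊ − E₋)), n·G(z)² + (n − 1)·G′(z) < 0 for all z ∈ (E₊, ξ), and n·G(z)² + (n − 1)·G′(z) > 0 for all z ∈ (ξ, ∞). -/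
open MeasureTheory Filter Topology

noncomputable section

set_option maxHeartbeats 1000000

namespace Statement15Aux

lemma compl_msupp_null (μ : Measure ℝ) : μ (msupp μ)ᶜ = 0 := by
  have hcompl : (msupp μ)ᶜ = ⋃₀ {U : Set ℝ | IsOpen U ∧ μ U = 0} := by
    ext x
    simp only [Set.mem_compl_iff, msupp, Set.mem_setOf_eq, Set.mem_sUnion]
    constructor
    · intro hx
      push_neg at hx
      obtain ⟨U, hU, hxU, hμU⟩ := hx
      exact ⟨U, ⟨hU, nonpos_iff_eq_zero.mp hμU⟩, hxU⟩
    · rintro ⟨U, ⟨hU, h0⟩, hxU⟩ h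
      exact absurd (h U hU hxU) (by simp [h0])
  obtain ⟨T, hTc, hTsub, hTU⟩ :=
    TopologicalSpace.isOpen_sUnion_countable {U : Set ℝ | IsOpen U ∧ μ U = 0}
      (fun U hU => hU.1)
  rw [hcompl, ← hTU]
  exact (measure_sUnion_null_iff hTc).mpr fun s hs => (hTsub hs).2

lemma ae_mem_msupp (μ : Measure ℝ) : ∀ᵐ x ∂μ, x ∈ msupp μ := by
  rw [ae_iff]
  exact compl_msupp_null μ

lemma eq_dirac (μ : Measure ℝ) [IsProbabilityMeasure μ] {c : ℝ}
    (h : ∀ᵐ x ∂μ, x = c) : μ = Measure.dirac c := by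
  have hnull : μ {c}ᶜ = 0 := by
    have h' := ae_iff.mp h
    have : ({c}ᶜ : Set ℝ) = {x | ¬ x = c} := by ext x; simp
    rw [this]; exact h'
  ext s hs
  rw [Measure.dirac_apply' _ hs]
  by_cases hc : c ∈ s
  · rw [Set.indicator_of_mem hc]
    simp only [Pi.one_apply]
    refine le_antisymm prob_le_one ?_
    calc (1 : ENNReal) = μ Set.univ := measure_univ.symm
      _ ≤ μ (s ∪ {c}ᶜ) := measure_mono (fun x _ => by
          by_cases hxs : x ∈ s
          · exact Or.inl hxs
          · exact Or.inr (fun hxc => hxs (Set.mem_singleton_iff.mp hxc ▸ hc)))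
      _ ≤ μ s + μ {c}ᶜ := measure_union_le _ _
      _ = μ s := by rw [hnull, add_zero]
  · rw [Set.indicator_of_notMem hc]
    have hsub : s ⊆ ({c}ᶜ : Set ℝ) := by
      intro x hx hxc
      have hxe : x = c := Set.mem_singleton_iff.mp hxc
      exact hc (hxe ▸ hx)
    exact measure_mono_null hsub hnull


def m1 (μ : Measure ℝ) (z : ℝ) : ℝ := ∫ x, (z - x)⁻¹ ∂μ
def m2 (μ : Measure ℝ) (z : ℝ) : ℝ := ∫ x, ((z - x) ^ 2)⁻¹ ∂μ
def m3 (μ : Measure ℝ) (z : ℝ) : ℝ := ∫ x, ((z - x) ^ 3)⁻¹ ∂μ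

variable {μ : Measure ℝ} [IsProbabilityMeasure μ] {a b z : ℝ}

lemma integrable_pow (hb : ∀ᵐ x ∂μ, x ≤ b) (hz : b < z) (k : ℕ) :
    Integrable (fun x => ((z - x) ^ k)⁻¹) μ := by
  have hmeas : AEStronglyMeasurable (fun x => ((z - x) ^ k)⁻¹) μ :=
    (((measurable_const.sub measurable_id).pow_const k).inv).aestronglyMeasurable
  refine (integrable_const (((z - b) ^ k)⁻¹)).mono' hmeas ?_
  filter_upwards [hb] with x hx
  have h1 : 0 < z - x := by linarith
  have h2 : 0 < z - b := by linarith
  rw [Real.norm_eq_abs, abs_of_nonneg (by positivity)]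
  exact inv_anti₀ (pow_pos h2 k) (pow_le_pow_left₀ h2.le (by linarith) k)

lemma integrable_inv (hb : ∀ᵐ x ∂μ, x ≤ b) (hz : b < z) :
    Integrable (fun x => (z - x)⁻¹) μ := by
  simpa [pow_one] using integrable_pow hb hz 1

lemma moment_le (hb : ∀ᵐ x ∂μ, x ≤ b) (hz : b < z) (k : ℕ) :
    ∫ x, ((z - x) ^ k)⁻¹ ∂μ ≤ ((z - b) ^ k)⁻¹ := by
  have h2 : 0 < z - b := by linarith
  calc ∫ x, ((z - x) ^ k)⁻¹ ∂μ ≤ ∫ _, ((z - b) ^ k)⁻¹ ∂μ := by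
        refine integral_mono_ae (integrable_pow hb hz k) (integrable_const _) ?_
        filter_upwards [hb] with x hx
        exact inv_anti₀ (pow_pos h2 k) (pow_le_pow_left₀ h2.le (by linarith) k)
    _ = ((z - b) ^ k)⁻¹ := by simp

lemma le_moment (hmem : ∀ᵐ x ∂μ, x ∈ Set.Icc a b) (hz : b < z) (k : ℕ) :
    ((z - a) ^ k)⁻¹ ≤ ∫ x, ((z - x) ^ k)⁻¹ ∂μ := by
  have hb : ∀ᵐ x ∂μ, x ≤ b := hmem.mono fun x hx => hx.2
  calc ((z - a) ^ k)⁻¹ = ∫ _, ((z - a) ^ k)⁻¹ ∂μ := by simp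
    _ ≤ ∫ x, ((z - x) ^ k)⁻¹ ∂μ := by
        refine integral_mono_ae (integrable_const _) (integrable_pow hb hz k) ?_
        filter_upwards [hmem] with x hx
        have h1 : 0 < z - x := by linarith [hx.2]
        exact inv_anti₀ (pow_pos h1 k) (pow_le_pow_left₀ h1.le (by linarith [hx.1]) k)

lemma m1_pos (hmem : ∀ᵐ x ∂μ, x ∈ Set.Icc a b) (hab : a ≤ b) (hz : b < z) : 0 < m1 μ z := by
  have h := le_moment hmem hz 1
  have h0 : (0:ℝ) < ((z - a) ^ 1)⁻¹ := by
    have : 0 < z - a := by linarith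
    positivity
  refine lt_of_lt_of_le h0 (le_trans h (le_of_eq ?_))
  simp [m1, pow_one]

lemma m2_pos (hmem : ∀ᵐ x ∂μ, x ∈ Set.Icc a b) (hab : a ≤ b) (hz : b < z) : 0 < m2 μ z := by
  have h := le_moment hmem hz 2
  have h0 : (0:ℝ) < ((z - a) ^ 2)⁻¹ := by
    have : 0 < z - a := by linarith
    positivity
  exact lt_of_lt_of_le h0 h

lemma m3_pos (hmem : ∀ᵐ x ∂μ, x ∈ Set.Icc a b) (hab : a ≤ b) (hz : b < z) : 0 < m3 μ z := by
  have h := le_moment hmem hz 3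
  have h0 : (0:ℝ) < ((z - a) ^ 3)⁻¹ := by
    have : 0 < z - a := by linarith
    positivity
  exact lt_of_lt_of_le h0 h

lemma key1 (hb : ∀ᵐ x ∂μ, x ≤ b) (hz : b < z) :
    m2 μ z - (m1 μ z) ^ 2 = ∫ x, ((z - x)⁻¹ - m1 μ z) ^ 2 ∂μ := by
  set c := m1 μ z with hc
  have hi2 := integrable_pow hb hz 2
  have hi1 := integrable_inv hb hz
  have hpt : (fun x => ((z - x)⁻¹ - c) ^ 2)
      = fun x => ((z - x) ^ 2)⁻¹ - (2 * c) * (z - x)⁻¹ + c ^ 2 := by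
    funext x
    rw [← inv_pow]
    ring
  have hmul : Integrable (fun x => (2 * c) * (z - x)⁻¹) μ := hi1.const_mul _
  have hisub : Integrable (fun x => ((z - x) ^ 2)⁻¹ - (2 * c) * (z - x)⁻¹) μ := hi2.sub hmul
  rw [hpt, integral_add hisub (integrable_const _),
    integral_sub hi2 hmul, integral_const_mul, integral_const]
  simp only [measure_univ, ENNReal.toReal_one, probReal_univ, smul_eq_mul, one_mul]
  show m2 μ z - c ^ 2 = m2 μ z - 2 * c * m1 μ z + c ^ 2
  rw [← hc]
  ring

lemma key2 (hb : ∀ᵐ x ∂μ, x ≤ b) (hz : b < z) (t : ℝ) :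
    m1 μ z - 2 * t * m2 μ z + t ^ 2 * m3 μ z
      = ∫ x, ((z - x) ^ 3)⁻¹ * ((z - x) - t) ^ 2 ∂μ := by
  have hi1 := integrable_inv hb hz
  have hi2 := integrable_pow hb hz 2
  have hi3 := integrable_pow hb hz 3
  have hpt : (fun x => ((z - x) ^ 3)⁻¹ * ((z - x) - t) ^ 2)
      = fun x => ((z - x)⁻¹ - (2 * t) * ((z - x) ^ 2)⁻¹) + t ^ 2 * ((z - x) ^ 3)⁻¹ := by
    funext x
    rcases eq_or_ne (z - x) 0 with h | h
    · simp [h]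
    · field_simp
      ring
  have hmul2 : Integrable (fun x => (2 * t) * ((z - x) ^ 2)⁻¹) μ := hi2.const_mul _
  have hmul3 : Integrable (fun x => t ^ 2 * ((z - x) ^ 3)⁻¹) μ := hi3.const_mul _
  have hisub : Integrable (fun x => (z - x)⁻¹ - (2 * t) * ((z - x) ^ 2)⁻¹) μ := hi1.sub hmul2
  rw [hpt, integral_add hisub hmul3,
    integral_sub hi1 hmul2, integral_const_mul, integral_const_mul]
  show m1 μ z - 2 * t * m2 μ z + t ^ 2 * m3 μ z
      = m1 μ z - 2 * t * m2 μ z + t ^ 2 * m3 μ z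
  rfl


lemma m1_sq_lt_m2 (hmem : ∀ᵐ x ∂μ, x ∈ Set.Icc a b) (hz : b < z)
    (hnd : ∀ c : ℝ, μ ≠ Measure.dirac c) : (m1 μ z) ^ 2 < m2 μ z := by
  have hb : ∀ᵐ x ∂μ, x ≤ b := hmem.mono fun x hx => hx.2
  set c := m1 μ z with hc
  have hkey := key1 hb hz
  have hgint : Integrable (fun x => ((z - x)⁻¹ - c) ^ 2) μ := by
    have hmul : Integrable (fun x => (2 * c) * (z - x)⁻¹) μ :=
      (integrable_inv hb hz).const_mul _
    have hisub : Integrable (fun x => ((z - x) ^ 2)⁻¹ - (2 * c) * (z - x)⁻¹) μ :=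
      (integrable_pow hb hz 2).sub hmul
    have : Integrable (fun x => (((z - x) ^ 2)⁻¹ - (2 * c) * (z - x)⁻¹) + c ^ 2) μ :=
      hisub.add (integrable_const _)
    refine this.congr (ae_of_all _ fun x => ?_)
    dsimp only
    rw [← inv_pow]; ring
  have hnn : 0 ≤ ∫ x, ((z - x)⁻¹ - c) ^ 2 ∂μ :=
    integral_nonneg fun x => sq_nonneg _
  rcases hnn.lt_or_eq with h | h
  · nlinarith [hkey]
  · exfalso
    have hg0 : (fun x => ((z - x)⁻¹ - c) ^ 2) =ᵐ[μ] 0 :=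
      (integral_eq_zero_iff_of_nonneg_ae (ae_of_all _ fun x => sq_nonneg _) hgint).mp h.symm
    have hae : ∀ᵐ x ∂μ, x = z - c⁻¹ := by
      filter_upwards [hg0, hmem] with x h0 hx
      have hzx : 0 < z - x := by linarith [hx.2]
      have h1 : (z - x)⁻¹ = c := by
        have := pow_eq_zero_iff (n := 2) (by norm_num) |>.mp h0
        linarith [this]
      have h2 : c⁻¹ = z - x := by rw [← h1, inv_inv]
      linarith
    exact hnd _ (eq_dirac μ hae)

lemma m2_sq_lt_m1_m3 (hmem : ∀ᵐ x ∂μ, x ∈ Set.Icc a b) (hab : a ≤ b) (hz : b < z)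
    (hnd : ∀ c : ℝ, μ ≠ Measure.dirac c) : (m2 μ z) ^ 2 < m1 μ z * m3 μ z := by
  have hb : ∀ᵐ x ∂μ, x ≤ b := hmem.mono fun x hx => hx.2
  have h3 : 0 < m3 μ z := m3_pos hmem hab hz
  set t := m2 μ z / m3 μ z with ht
  have hkey := key2 hb hz t
  have hgint : Integrable (fun x => ((z - x) ^ 3)⁻¹ * ((z - x) - t) ^ 2) μ := by
    have hmul2 : Integrable (fun x => (2 * t) * ((z - x) ^ 2)⁻¹) μ :=
      (integrable_pow hb hz 2).const_mul _
    have hmul3 : Integrable (fun x => t ^ 2 * ((z - x) ^ 3)⁻¹) μ :=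
      (integrable_pow hb hz 3).const_mul _
    have hisub : Integrable (fun x => (z - x)⁻¹ - (2 * t) * ((z - x) ^ 2)⁻¹) μ :=
      (integrable_inv hb hz).sub hmul2
    have hsum : Integrable
        (fun x => ((z - x)⁻¹ - (2 * t) * ((z - x) ^ 2)⁻¹) + t ^ 2 * ((z - x) ^ 3)⁻¹) μ :=
      hisub.add hmul3
    refine hsum.congr (ae_of_all _ fun x => ?_)
    dsimp only
    rcases eq_or_ne (z - x) 0 with h | h
    · simp [h]
    · field_simp; ring
  have hnnae : 0 ≤ᵐ[μ] fun x => ((z - x) ^ 3)⁻¹ * ((z - x) - t) ^ 2 := by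
    filter_upwards [hmem] with x hx
    have hzx : 0 < z - x := by linarith [hx.2]
    positivity
  have hnn : 0 ≤ ∫ x, ((z - x) ^ 3)⁻¹ * ((z - x) - t) ^ 2 ∂μ := integral_nonneg_of_ae hnnae
  have hpos : 0 < m1 μ z - 2 * t * m2 μ z + t ^ 2 * m3 μ z := by
    rcases hnn.lt_or_eq with h | h
    · linarith [hkey]
    · exfalso
      have hg0 : (fun x => ((z - x) ^ 3)⁻¹ * ((z - x) - t) ^ 2) =ᵐ[μ] 0 :=
        (integral_eq_zero_iff_of_nonneg_ae hnnae hgint).mp h.symm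
      have hae : ∀ᵐ x ∂μ, x = z - t := by
        filter_upwards [hg0, hmem] with x h0 hx
        have hzx : 0 < z - x := by linarith [hx.2]
        have h1 : ((z - x) ^ 3)⁻¹ ≠ 0 := by positivity
        have h2 : ((z - x) - t) ^ 2 = 0 := by
          rcases mul_eq_zero.mp h0 with h' | h'
          · exact absurd h' h1
          · exact h'
        have h3 : (z - x) - t = 0 := by
          have := pow_eq_zero_iff (n := 2) (by norm_num) |>.mp h2
          linarith [this]
        linarith
      exact hnd _ (eq_dirac μ hae)
  have hexp : (m1 μ z - 2 * t * m2 μ z + t ^ 2 * m3 μ z) * m3 μ z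
      = m1 μ z * m3 μ z - (m2 μ z) ^ 2 := by
    rw [ht]; field_simp; ring
  nlinarith [mul_pos hpos h3, hexp]

lemma hasDerivAt_m1 (hb : ∀ᵐ x ∂μ, x ≤ b) (hz : b < z) :
    HasDerivAt (m1 μ) (-(m2 μ z)) z := by
  set ε := (z - b) / 2 with hε
  have hεpos : 0 < ε := by simp only [hε]; linarith
  have hkey : ∀ (x : ℝ), x ≤ b → ∀ y ∈ Metric.ball z ε, ε < y - x := by
    intro x hx y hy
    have hd : |y - z| < ε := by rwa [Metric.mem_ball, Real.dist_eq] at hy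
    have := abs_lt.mp hd
    simp only [hε] at this ⊢
    linarith [this.1]
  have key := hasDerivAt_integral_of_dominated_loc_of_deriv_le (μ := μ) (x₀ := z)
    (F := fun y x => (y - x)⁻¹) (F' := fun y x => -(((y - x) ^ 2)⁻¹))
    (bound := fun _ => (ε ^ 2)⁻¹) (s := Metric.ball z ε) (Metric.ball_mem_nhds z hεpos)
    (Eventually.of_forall fun y =>
      ((measurable_const.sub measurable_id).inv).aestronglyMeasurable)
    (integrable_inv hb hz)
    (((measurable_const.sub measurable_id).pow_const 2).inv.neg).aestronglyMeasurable
    (by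
      filter_upwards [hb] with x hx y hy
      have h1 : ε < y - x := hkey x hx y hy
      rw [norm_neg, Real.norm_eq_abs, abs_of_nonneg (by positivity)]
      exact inv_anti₀ (pow_pos hεpos 2) (pow_le_pow_left₀ hεpos.le h1.le 2))
    (integrable_const _)
    (by
      filter_upwards [hb] with x hx y hy
      have h1 : ε < y - x := hkey x hx y hy
      have hne : y - x ≠ 0 := by linarith
      have hd : HasDerivAt (fun y => y - x) 1 y := (hasDerivAt_id y).sub_const x
      have hinv := hd.inv hne
      have heq : -1 / (y - x) ^ 2 = -(((y - x) ^ 2)⁻¹) := by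
        rw [neg_div, one_div]
      exact heq ▸ hinv)
  have hneg : ∫ x, -(((z - x) ^ 2)⁻¹) ∂μ = -(m2 μ z) := by
    rw [integral_neg]; rfl
  exact hneg ▸ key.2

lemma hasDerivAt_m2 (hb : ∀ᵐ x ∂μ, x ≤ b) (hz : b < z) :
    HasDerivAt (m2 μ) (-(2 * m3 μ z)) z := by
  set ε := (z - b) / 2 with hε
  have hεpos : 0 < ε := by simp only [hε]; linarith
  have hkey : ∀ (x : ℝ), x ≤ b → ∀ y ∈ Metric.ball z ε, ε < y - x := by
    intro x hx y hy
    have hd : |y - z| < ε := by rwa [Metric.mem_ball, Real.dist_eq] at hy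
    have := abs_lt.mp hd
    simp only [hε] at this ⊢
    linarith [this.1]
  have key := hasDerivAt_integral_of_dominated_loc_of_deriv_le (μ := μ) (x₀ := z)
    (F := fun y x => ((y - x) ^ 2)⁻¹) (F' := fun y x => -(2 * ((y - x) ^ 3)⁻¹))
    (bound := fun _ => 2 * (ε ^ 3)⁻¹) (s := Metric.ball z ε) (Metric.ball_mem_nhds z hεpos)
    (Eventually.of_forall fun y =>
      (((measurable_const.sub measurable_id).pow_const 2).inv).aestronglyMeasurable)
    (integrable_pow hb hz 2)
    ((((measurable_const.sub measurable_id).pow_const 3).inv.const_mul 2).neg).aestronglyMeasurable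
    (by
      filter_upwards [hb] with x hx y hy
      have h1 : ε < y - x := hkey x hx y hy
      have hpos0 : (0:ℝ) < y - x := lt_trans hεpos h1
      rw [norm_neg, Real.norm_eq_abs,
        abs_of_nonneg (mul_nonneg (by norm_num) (inv_nonneg.mpr (pow_nonneg hpos0.le 3)))]
      have : ((y - x) ^ 3)⁻¹ ≤ (ε ^ 3)⁻¹ :=
        inv_anti₀ (pow_pos hεpos 3) (pow_le_pow_left₀ hεpos.le h1.le 3)
      linarith
    )
    (integrable_const _)
    (by
      filter_upwards [hb] with x hx y hy
      have h1 : ε < y - x := hkey x hx y hy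
      have hpos : 0 < y - x := lt_trans hεpos h1
      have hne : (y - x) ^ 2 ≠ 0 := pow_ne_zero 2 (ne_of_gt hpos)
      have hd : HasDerivAt (fun y => y - x) 1 y := (hasDerivAt_id y).sub_const x
      have hd2 := hd.pow 2
      have hinv := hd2.inv hne
      have heq : -(↑2 * (y - x) ^ (2 - 1) * 1) / ((y - x) ^ 2) ^ 2 = -(2 * ((y - x) ^ 3)⁻¹) := by
        have hne' : y - x ≠ 0 := ne_of_gt hpos
        field_simp
        ring
      exact heq ▸ hinv)
  have hneg : ∫ x, -(2 * ((z - x) ^ 3)⁻¹) ∂μ = -(2 * m3 μ z) := by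
    rw [integral_neg, integral_const_mul]; rfl
  exact hneg ▸ key.2

end Statement15Aux

/-- Let `μ` be a compactly supported probability measure on `ℝ`, not a
point mass, `x₀ := E₊ + 4(E₊ − E₋)`, `G(z) := ∫ (z−x)⁻¹ dμ`, `G′(z) := −∫ (z−x)⁻² dμ`.
Then `1 + G(x₀)²/G′(x₀) ∈ (0,1)`, and for every `n ∈ ℕ` with
`n ≥ τ := (1 + G(x₀)²/G′(x₀))⁻¹` there is a unique `ξ ∈ (E₊, ∞)` with
`n G(ξ)² + (n−1) G′(ξ) = 0`; moreover `ξ ≥ x₀`, the quantity `n G² + (n−1) G′` is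
negative on `(E₊, ξ)` and positive on `(ξ, ∞)`. -/
theorem statement15 (μ : Measure ℝ) [IsProbabilityMeasure μ]
    (hcompact : IsCompact (msupp μ))
    (hnotdirac : ∀ a : ℝ, μ ≠ Measure.dirac a) :
    let Em : ℝ := sInf (msupp μ)
    let Ep : ℝ := sSup (msupp μ)
    let x₀ : ℝ := Ep + 4 * (Ep - Em)
    let G : ℝ → ℝ := fun z => ∫ x, (z - x)⁻¹ ∂μ
    let G' : ℝ → ℝ := fun z => -∫ x, ((z - x) ^ 2)⁻¹ ∂μ
    (0 < 1 + G x₀ ^ 2 / G' x₀ ∧ 1 + G x₀ ^ 2 / G' x₀ < 1) ∧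
      ∀ n : ℕ, (1 + G x₀ ^ 2 / G' x₀)⁻¹ ≤ (n : ℝ) →
        ∃ ξ : ℝ, ξ ∈ Set.Ioi Ep ∧
          (n : ℝ) * G ξ ^ 2 + ((n : ℝ) - 1) * G' ξ = 0 ∧
          (∀ ξ' ∈ Set.Ioi Ep, (n : ℝ) * G ξ' ^ 2 + ((n : ℝ) - 1) * G' ξ' = 0 → ξ' = ξ) ∧
          x₀ ≤ ξ ∧
          (∀ z ∈ Set.Ioo Ep ξ, (n : ℝ) * G z ^ 2 + ((n : ℝ) - 1) * G' z < 0) ∧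
          (∀ z ∈ Set.Ioi ξ, 0 < (n : ℝ) * G z ^ 2 + ((n : ℝ) - 1) * G' z) := by
  intro Em Ep x₀ G G'
  classical
  open Statement15Aux in
  -- basic support facts
  have hnull : μ (msupp μ)ᶜ = 0 := Statement15Aux.compl_msupp_null μ
  have hSne : (msupp μ).Nonempty := by
    by_contra h
    rw [Set.not_nonempty_iff_eq_empty] at h
    rw [h, Set.compl_empty] at hnull
    simp at hnull
  have hbddA : BddAbove (msupp μ) := hcompact.bddAbove
  have hbddB : BddBelow (msupp μ) := hcompact.bddBelow
  have hSsub : msupp μ ⊆ Set.Icc Em Ep := fun x hx => ⟨csInf_le hbddB hx, le_csSup hbddA hx⟩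
  have hmem : ∀ᵐ x ∂μ, x ∈ Set.Icc Em Ep := by
    filter_upwards [Statement15Aux.ae_mem_msupp μ] with x hx
    exact hSsub hx
  have hb : ∀ᵐ x ∂μ, x ≤ Ep := hmem.mono fun x hx => hx.2
  have hab : Em ≤ Ep := by
    obtain ⟨x, hx⟩ := hSne
    exact le_trans (hSsub hx).1 (hSsub hx).2
  have hlt : Em < Ep := by
    rcases lt_or_eq_of_le hab with h | h
    · exact h
    · exfalso
      apply hnotdirac Ep
      apply Statement15Aux.eq_dirac
      filter_upwards [hmem] with x hx
      have h1 := hx.1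
      have h2 := hx.2
      rw [← h] at h2
      linarith
  have hx₀def : x₀ = Ep + 4 * (Ep - Em) := rfl
  have hx₀ : Ep < x₀ := by rw [hx₀def]; linarith
  have hG : ∀ z, G z = m1 μ z := fun _ => rfl
  have hG' : ∀ z, G' z = -(m2 μ z) := fun _ => rfl
  -- moment facts on (Ep, ∞)
  have h1pos : ∀ z, Ep < z → 0 < m1 μ z := fun z hz => m1_pos hmem hab hz
  have h2pos : ∀ z, Ep < z → 0 < m2 μ z := fun z hz => m2_pos hmem hab hz
  have hcs1 : ∀ z, Ep < z → (m1 μ z) ^ 2 < m2 μ z := fun z hz =>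
    m1_sq_lt_m2 hmem hz hnotdirac
  have hcs2 : ∀ z, Ep < z → (m2 μ z) ^ 2 < m1 μ z * m3 μ z := fun z hz =>
    m2_sq_lt_m1_m3 hmem hab hz hnotdirac
  -- the ratio function
  set r : ℝ → ℝ := fun z => (m1 μ z) ^ 2 / m2 μ z with hr
  have hrpos : ∀ z, Ep < z → 0 < r z := fun z hz =>
    div_pos (pow_pos (h1pos z hz) 2) (h2pos z hz)
  have hrlt1 : ∀ z, Ep < z → r z < 1 := fun z hz =>
    (div_lt_one (h2pos z hz)).mpr (hcs1 z hz)
  have hder : ∀ z, Ep < z → HasDerivAt r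
      (((↑2 * m1 μ z ^ (2 - 1) * (-(m2 μ z))) * m2 μ z
          - m1 μ z ^ 2 * (-(2 * m3 μ z))) / m2 μ z ^ 2) z := by
    intro z hz
    have hd1 := hasDerivAt_m1 hb hz
    have hd2 := hasDerivAt_m2 hb hz
    exact (hd1.pow 2).div hd2 (ne_of_gt (h2pos z hz))
  have hderpos : ∀ z, Ep < z →
      0 < ((↑2 * m1 μ z ^ (2 - 1) * (-(m2 μ z))) * m2 μ z
          - m1 μ z ^ 2 * (-(2 * m3 μ z))) / m2 μ z ^ 2 := by
    intro z hz
    apply div_pos _ (pow_pos (h2pos z hz) 2)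
    have h1 := h1pos z hz
    have h2 := hcs2 z hz
    norm_num
    nlinarith [mul_pos h1 (sub_pos.mpr h2)]
  have hcontOn : ContinuousOn r (Set.Ioi Ep) := fun z hz =>
    ((hder z hz).continuousAt).continuousWithinAt
  have hsm : StrictMonoOn r (Set.Ioi Ep) := by
    refine strictMonoOn_of_deriv_pos (convex_Ioi Ep) hcontOn ?_
    intro z hz
    rw [interior_Ioi] at hz
    rw [(hder z hz).deriv]
    exact hderpos z hz
  -- lower bound on r
  have hrlb : ∀ z, Ep < z → ((z - Ep) / (z - Em)) ^ 2 ≤ r z := by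
    intro z hz
    have hzEm : 0 < z - Em := by linarith
    have hzEp : 0 < z - Ep := by linarith
    rw [show r z = m1 μ z ^ 2 / m2 μ z from rfl, le_div_iff₀ (h2pos z hz)]
    have hq0 : 0 ≤ ((z - Ep) / (z - Em)) ^ 2 := sq_nonneg _
    calc ((z - Ep) / (z - Em)) ^ 2 * m2 μ z
        ≤ ((z - Ep) / (z - Em)) ^ 2 * ((z - Ep) ^ 2)⁻¹ := by
          apply mul_le_mul_of_nonneg_left _ hq0
          exact moment_le hb hz 2
      _ = ((z - Em) ^ 2)⁻¹ := by
          rw [div_pow]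
          field_simp
      _ = ((z - Em)⁻¹) ^ 2 := by rw [inv_pow]
      _ ≤ (m1 μ z) ^ 2 := by
          apply pow_le_pow_left₀ (inv_nonneg.mpr hzEm.le)
          have h := le_moment hmem hz 1
          rw [pow_one] at h
          calc (z - Em)⁻¹ ≤ ∫ x, ((z - x) ^ 1)⁻¹ ∂μ := by
                simpa [pow_one] using le_moment hmem hz 1
            _ = m1 μ z := by simp [m1, pow_one]
  -- first conjunct
  have hgg : ∀ z, Ep < z → 1 + G z ^ 2 / G' z = 1 - r z := by
    intro z hz
    rw [hG, hG', div_neg, show r z = m1 μ z ^ 2 / m2 μ z from rfl]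
    ring
  have hr0pos := hrpos x₀ hx₀
  have hr0lt1 := hrlt1 x₀ hx₀
  refine ⟨by rw [hgg x₀ hx₀]; constructor <;> linarith, ?_⟩
  intro n hn
  rw [hgg x₀ hx₀] at hn
  have h1mr : 0 < 1 - r x₀ := by linarith
  have hτ1 : 1 < (1 - r x₀)⁻¹ := by
    have h := inv_pos.mpr h1mr
    nlinarith [mul_inv_cancel₀ (ne_of_gt h1mr)]
  have hn1 : (1 : ℝ) < n := lt_of_lt_of_le hτ1 hn
  have hnn1 : 1 < n := by exact_mod_cast hn1
  have hn2 : (2 : ℝ) ≤ n := by exact_mod_cast hnn1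
  have hnpos : (0 : ℝ) < n := by linarith
  set v : ℝ := ((n : ℝ) - 1) / n with hv
  have hrle : r x₀ ≤ v := by
    have h1 : 1 ≤ (1 - r x₀) * n := by
      nlinarith [mul_inv_cancel₀ (ne_of_gt h1mr), inv_pos.mpr h1mr]
    rw [hv, le_div_iff₀ hnpos]
    nlinarith
  set Z : ℝ := max x₀ (Ep + 4 * n * (Ep - Em) + 1) with hZ
  have hZx₀ : x₀ ≤ Z := le_max_left _ _
  have hZEp : Ep < Z := lt_of_lt_of_le hx₀ hZx₀
  have hrZ : v ≤ r Z := by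
    have hs : Ep + 4 * n * (Ep - Em) + 1 ≤ Z := le_max_right _ _
    have hd : 0 < Ep - Em := by linarith
    have hsle : 4 * n * (Ep - Em) + 1 ≤ Z - Ep := by linarith
    have hZEm : 0 < Z - Em := by linarith
    have hq : v ≤ ((Z - Ep) / (Z - Em)) ^ 2 := by
      rw [hv, div_pow, div_le_div_iff₀ hnpos (pow_pos hZEm 2)]
      have hZEm' : Z - Em = (Z - Ep) + (Ep - Em) := by ring
      nlinarith [sq_nonneg (Z - Ep), mul_pos hd (sub_pos.mpr (show (1:ℝ) < n from hn1)),
        mul_pos hnpos hd, sq_nonneg (Ep - Em)]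
    exact le_trans hq (hrlb Z hZEp)
  -- intermediate value
  have hIccsub : Set.Icc x₀ Z ⊆ Set.Ioi Ep := fun y hy => lt_of_lt_of_le hx₀ hy.1
  have hcont2 : ContinuousOn r (Set.Icc x₀ Z) := hcontOn.mono hIccsub
  obtain ⟨ξ, hξIcc, hrξ⟩ := intermediate_value_Icc hZx₀ hcont2 ⟨hrle, hrZ⟩
  have hξEp : Ep < ξ := lt_of_lt_of_le hx₀ hξIcc.1
  -- sign equivalences
  have hFlt : ∀ z, Ep < z → (((n : ℝ) * G z ^ 2 + ((n : ℝ) - 1) * G' z < 0) ↔ r z < v) := by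
    intro z hz
    rw [hG, hG', show r z = m1 μ z ^ 2 / m2 μ z from rfl, hv, div_lt_div_iff₀ (h2pos z hz) hnpos]
    constructor <;> intro h <;> nlinarith
  have hFgt : ∀ z, Ep < z → ((0 < (n : ℝ) * G z ^ 2 + ((n : ℝ) - 1) * G' z) ↔ v < r z) := by
    intro z hz
    rw [hG, hG', show r z = m1 μ z ^ 2 / m2 μ z from rfl, hv, div_lt_div_iff₀ hnpos (h2pos z hz)]
    constructor <;> intro h <;> nlinarith
  have hFeq : ∀ z, Ep < z → (((n : ℝ) * G z ^ 2 + ((n : ℝ) - 1) * G' z = 0) ↔ r z = v) := by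
    intro z hz
    rw [hG, hG', show r z = m1 μ z ^ 2 / m2 μ z from rfl, hv, div_eq_div_iff (ne_of_gt (h2pos z hz)) (ne_of_gt hnpos)]
    constructor <;> intro h <;> nlinarith
  refine ⟨ξ, hξEp, (hFeq ξ hξEp).mpr hrξ, ?_, hξIcc.1, ?_, ?_⟩
  · intro ξ' hξ' hF'
    exact hsm.injOn hξ' hξEp (by rw [(hFeq ξ' hξ').mp hF', hrξ])
  · intro z hz
    rw [hFlt z hz.1]
    rw [← hrξ]
    exact hsm hz.1 hξEp hz.2
  · intro z hz
    have hzEp : Ep < z := lt_trans hξEp hz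
    rw [hFgt z hzEp]
    rw [← hrξ]
    exact hsm hξEp hzEp hz
end
end

section
/- Let a, b ∈ ℝ with a ≥ −1/2 and −1 < b ≤ −1/2, let Z := ∫₀¹ x^a (1 − x)^b dx (which is finite and positive), and let μ be the Borel probability measure on ℝ with density x^a (1 − x)^b / Z on (0, 1) (and zero elsewhere). Then for every x₀ ∈ (0, 1) there exists a real number L ≤ 0 such that Re ∫ (x₀ + i t − x)^{−1} dμ(x) → L as t → 0⁺. In other words, the boundary values from the upper half plane of the real part of the Cauchy transform of μ on (0,1) exist and are nonpositive. -/
open MeasureTheory Filter Topology Set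

noncomputable section

namespace St17

def w (a b x : ℝ) : ℝ := x ^ a * (1 - x) ^ b
def w' (a b x : ℝ) : ℝ := a * x^(a-1) * (1-x)^b - b * x^a * (1-x)^(b-1)

lemma w_pos {a b x : ℝ} (hx : x ∈ Ioo (0:ℝ) 1) : 0 < w a b x :=
  mul_pos (Real.rpow_pos_of_pos hx.1 _) (Real.rpow_pos_of_pos (by linarith [hx.2]) _)

lemma w_nonneg {a b x : ℝ} (hx : x ∈ Ioo (0:ℝ) 1) : 0 ≤ w a b x := (w_pos hx).le

lemma w_meas (a b : ℝ) : Measurable (w a b) := by unfold w; fun_prop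

lemma contOn_rpow1 (p : ℝ) : ContinuousOn (fun x : ℝ => x ^ p) (Ioo (0:ℝ) 1) :=
  fun x hx => (Real.continuousAt_rpow_const x p (Or.inl hx.1.ne')).continuousWithinAt

lemma contOn_rpow2 (p : ℝ) : ContinuousOn (fun x : ℝ => (1-x) ^ p) (Ioo (0:ℝ) 1) := by
  intro x hx
  have : ContinuousAt (fun y : ℝ => y ^ p) (1 - x) :=
    Real.continuousAt_rpow_const _ p (Or.inl (ne_of_gt (by linarith [hx.2] : (0:ℝ) < 1 - x)))
  exact (this.comp ((continuous_const.sub continuous_id).continuousAt)).continuousWithinAt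

lemma continuousOn_w (a b : ℝ) : ContinuousOn (w a b) (Ioo (0:ℝ) 1) :=
  (contOn_rpow1 a).mul (contOn_rpow2 b)

lemma continuousOn_w' (a b : ℝ) : ContinuousOn (w' a b) (Ioo (0:ℝ) 1) :=
  (((contOn_rpow1 (a-1)).const_smul a).mul (contOn_rpow2 b)).sub
    (((contOn_rpow1 a).const_smul b).mul (contOn_rpow2 (b-1)))

lemma hasDerivAt_w {a b x : ℝ} (hx : x ∈ Ioo (0:ℝ) 1) :
    HasDerivAt (w a b) (w' a b x) x := by
  have h1 : HasDerivAt (fun y : ℝ => y ^ a) (a * x^(a-1)) x :=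
    Real.hasDerivAt_rpow_const (Or.inl hx.1.ne')
  have hin : HasDerivAt (fun y : ℝ => 1 - y) (-1) x := by
    simpa using (hasDerivAt_id x).const_sub 1
  have h2 : HasDerivAt (fun y : ℝ => (1-y) ^ b) (b * (1-x)^(b-1) * (-1)) x :=
    (Real.hasDerivAt_rpow_const
      (Or.inl (ne_of_gt (by linarith [hx.2] : (0:ℝ) < 1 - x)))).comp x hin
  have := h1.mul h2
  refine this.congr_deriv ?_
  unfold w'
  ring

lemma integrableOn_w {a b : ℝ} (ha : -1 < a) (hb : -1 < b) :
    IntegrableOn (w a b) (Ioo (0:ℝ) 1) := by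
  have h := Complex.betaIntegral_convergent (u := (a:ℂ)+1) (v := (b:ℂ)+1)
    (by simp; linarith) (by simp; linarith)
  have h2 : IntegrableOn (fun x : ℝ => (x:ℂ) ^ ((a:ℂ)+1-1) * (1 - (x:ℂ)) ^ ((b:ℂ)+1-1))
      (Ioo (0:ℝ) 1) := by
    have := h.1
    rw [integrableOn_Ioc_iff_integrableOn_Ioo] at this
    simpa using this
  have h3 := h2.norm
  refine IntegrableOn.congr_fun h3 (fun x hx => ?_) measurableSet_Ioo
  have hx1 : (0:ℝ) < 1 - x := by linarith [hx.2]
  simp only [norm_mul]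
  rw [show ((a:ℂ)+1-1) = (a:ℂ) by ring, show ((b:ℂ)+1-1) = (b:ℂ) by ring]
  rw [show (1 - (x:ℂ)) = ((1-x:ℝ):ℂ) by push_cast; ring]
  rw [Complex.norm_cpow_eq_rpow_re_of_pos hx.1, Complex.norm_cpow_eq_rpow_re_of_pos hx1]
  simp [w]

lemma Z_pos {a b : ℝ} (ha : -1 < a) (hb : -1 < b) :
    0 < ∫ x in Ioo (0:ℝ) 1, w a b x := by
  rw [MeasureTheory.setIntegral_pos_iff_support_of_nonneg_ae ?_ (integrableOn_w ha hb)]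
  · have hsub : Ioo (0:ℝ) 1 ⊆ Function.support (w a b) ∩ Ioo (0:ℝ) 1 :=
      fun x hx => ⟨(w_pos hx).ne', hx⟩
    calc (0:ENNReal) < volume (Ioo (0:ℝ) 1) := by simp
    _ ≤ _ := measure_mono hsub
  · filter_upwards [ae_restrict_mem measurableSet_Ioo] with x hx using w_nonneg hx

lemma integrableOn_diffquot {a b c : ℝ}
    (hw : IntegrableOn (w a b) (Ioo (0:ℝ) 1)) (hc : c ∈ Ioo (0:ℝ) 1) :
    IntegrableOn (fun x => (w a b x - w a b c)/(c-x)) (Ioo (0:ℝ) 1) := by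
  obtain ⟨hc0, hc1⟩ := hc
  set δ : ℝ := min (c/2) ((1-c)/2) with hδdef
  have hδ : 0 < δ := lt_min (by linarith) (by linarith)
  have hsub : Icc (c-δ) (c+δ) ⊆ Ioo (0:ℝ) 1 := by
    intro x hx
    have h1 := min_le_left (c/2) ((1-c)/2)
    have h2 := min_le_right (c/2) ((1-c)/2)
    exact ⟨by cases hx; linarith, by cases hx; linarith⟩
  obtain ⟨M, hM⟩ := (isCompact_Icc (a := c-δ) (b := c+δ)).exists_bound_of_continuousOn
    ((continuousOn_w' a b).mono hsub)
  have hM0 : 0 ≤ M := le_trans (norm_nonneg _)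
    (hM c (by rw [Set.mem_Icc]; constructor <;> linarith))
  have hlip : ∀ x ∈ Icc (c-δ) (c+δ), |w a b x - w a b c| ≤ M * |x - c| := by
    intro x hx
    have := Convex.norm_image_sub_le_of_norm_hasDerivWithin_le
      (f := w a b) (f' := w' a b) (s := Icc (c-δ) (c+δ)) (C := M) (x := c) (y := x)
      (fun y hy => (hasDerivAt_w (hsub hy)).hasDerivWithinAt) hM (convex_Icc _ _)
      (by rw [Set.mem_Icc]; constructor <;> linarith) hx
    simpa [Real.norm_eq_abs] using this
  have hmeas : AEStronglyMeasurable (fun x => (w a b x - w a b c)/(c-x))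
      (volume.restrict (Ioo (0:ℝ) 1)) := by
    exact ((((w_meas a b).sub measurable_const).div
      (measurable_const.sub measurable_id)).stronglyMeasurable).aestronglyMeasurable
  refine Integrable.mono' (g := fun x => M + (w a b x + w a b c)/δ) ?_ hmeas ?_
  · exact (integrableOn_const (by simp)).add
      ((hw.add (integrableOn_const (by simp))).div_const δ)
  · filter_upwards [ae_restrict_mem measurableSet_Ioo] with x hx
    have hwx := mul_pos (Real.rpow_pos_of_pos hx.1 a)
      (Real.rpow_pos_of_pos (by linarith [hx.2] : (0:ℝ) < 1 - x) b)
    have hwc := mul_pos (Real.rpow_pos_of_pos hc0 a)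
      (Real.rpow_pos_of_pos (by linarith : (0:ℝ) < 1 - c) b)
    rw [Real.norm_eq_abs, abs_div]
    rcases le_or_gt |x - c| δ with hcase | hcase
    · have hxs : x ∈ Icc (c-δ) (c+δ) := by
        rw [abs_le] at hcase; rw [Set.mem_Icc]; constructor <;> linarith [hcase.1, hcase.2]
      rcases eq_or_ne x c with rfl | hne
      · simp only [sub_self, abs_zero, zero_div]
        positivity
      · have habs : |c - x| ≠ 0 := by
          simp only [ne_eq, abs_eq_zero, sub_eq_zero]
          exact fun h => hne h.symm
        have h1 : |w a b x - w a b c| / |c-x| ≤ M := by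
          rw [div_le_iff₀ (lt_of_le_of_ne (abs_nonneg _) (Ne.symm habs))]
          calc |w a b x - w a b c| ≤ M * |x - c| := hlip x hxs
          _ = M * |c - x| := by rw [abs_sub_comm]
        have h2 : 0 ≤ (w a b x + w a b c)/δ := by positivity
        linarith
    · have hd : δ ≤ |c - x| := by rw [abs_sub_comm]; linarith
      have h1 : |w a b x - w a b c| ≤ w a b x + w a b c := by
        rw [abs_sub_le_iff]
        constructor <;> unfold w <;> nlinarith [hwx, hwc]
      calc |w a b x - w a b c| / |c - x| ≤ (w a b x + w a b c) / δ := by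
            apply div_le_div₀ (by positivity) h1 hδ hd
      _ ≤ M + (w a b x + w a b c)/δ := by linarith

lemma tendsto_Kt {a b c : ℝ} (hc : c ∈ Ioo (0:ℝ) 1)
    (hq : IntegrableOn (fun x => (w a b x - w a b c)/(c-x)) (Ioo (0:ℝ) 1)) :
    Tendsto (fun t : ℝ => ∫ x in Ioo (0:ℝ) 1, (c-x)/((c-x)^2+t^2) * (w a b x - w a b c))
      (𝓝[>] (0:ℝ))
      (𝓝 (∫ x in Ioo (0:ℝ) 1, (w a b x - w a b c)/(c-x))) := by
  have hwm : Measurable (w a b) := w_meas a b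
  apply MeasureTheory.tendsto_integral_filter_of_dominated_convergence
    (bound := fun x => |(w a b x - w a b c)/(c-x)|)
  · filter_upwards with t
    exact ((((measurable_const.sub measurable_id).div
      (((measurable_const.sub measurable_id).pow measurable_const).add measurable_const)).mul
      (hwm.sub measurable_const)).stronglyMeasurable).aestronglyMeasurable
  · filter_upwards with t
    filter_upwards with x
    rw [Real.norm_eq_abs, abs_mul, abs_div, abs_div]
    rcases eq_or_ne x c with rfl | hne
    · simp
    · have hcx : c - x ≠ 0 := sub_ne_zero.mpr (fun h => hne h.symm)
      have h2 : 0 < (c-x)^2 := pow_two_pos_of_ne_zero hcx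
      have hden : 0 < (c-x)^2 + t^2 := by nlinarith [sq_nonneg t]
      rw [abs_of_pos hden, mul_comm]
      have key : |c-x| / ((c-x)^2+t^2) ≤ 1/|c-x| := by
        rw [div_le_div_iff₀ hden (abs_pos.mpr hcx)]
        have habs : |c-x| * |c-x| = (c-x)^2 := by rw [← sq, sq_abs]
        nlinarith [sq_nonneg t]
      calc |w a b x - w a b c| * (|c - x| / ((c - x) ^ 2 + t ^ 2))
          ≤ |w a b x - w a b c| * (1/|c-x|) := mul_le_mul_of_nonneg_left key (abs_nonneg _)
      _ = |w a b x - w a b c| / |c-x| := by rw [mul_one_div]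
  · exact hq.abs
  · have hane : ∀ᵐ x ∂(volume.restrict (Ioo (0:ℝ) 1)), x ≠ c := by
      apply ae_restrict_of_ae
      rw [ae_iff]
      simpa using measure_singleton c
    filter_upwards [hane] with x hne
    have hcx : c - x ≠ 0 := sub_ne_zero.mpr (fun h => hne h.symm)
    have h2 : 0 < (c-x)^2 := pow_two_pos_of_ne_zero hcx
    have hcont : Tendsto (fun t : ℝ => (c-x)/((c-x)^2+t^2) * (w a b x - w a b c)) (𝓝 0)
        (𝓝 ((w a b x - w a b c)/(c-x))) := by
      have : Continuous fun t : ℝ => (c-x)/((c-x)^2+t^2) * (w a b x - w a b c) := by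
        apply Continuous.mul _ continuous_const
        apply continuous_const.div (by continuity)
        intro t; nlinarith [sq_nonneg t]
      have h0 := this.tendsto 0
      convert h0 using 2
      field_simp
      ring
    exact hcont.mono_left nhdsWithin_le_nhds

lemma integral_K_one {c : ℝ} (t : ℝ) (ht : 0 < t) :
    ∫ x in Ioo (0:ℝ) 1, (c-x)/((c-x)^2+t^2)
      = Real.log (c^2+t^2)/2 - Real.log ((1-c)^2+t^2)/2 := by
  have hden : ∀ x : ℝ, (c-x)^2 + t^2 ≠ 0 := fun x => by positivity
  have hderiv : ∀ x : ℝ, HasDerivAt (fun y => -(Real.log ((c-y)^2+t^2))/2)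
      ((c-x)/((c-x)^2+t^2)) x := by
    intro x
    have hg : HasDerivAt (fun y : ℝ => (c-y)^2+t^2) (2*(c-x)*(-1)) x := by
      have h1 : HasDerivAt (fun y : ℝ => c - y) (-1) x := by
        simpa using (hasDerivAt_id x).const_sub c
      simpa using (h1.pow 2).add_const (t^2)
    have hlog := (Real.hasDerivAt_log (hden x)).comp x hg
    have := (hlog.neg).div_const 2
    refine this.congr_deriv ?_
    field_simp
  rw [← integral_Ioc_eq_integral_Ioo, ← intervalIntegral.integral_of_le zero_le_one]
  rw [intervalIntegral.integral_eq_sub_of_hasDerivAt (fun x _ => hderiv x) ?_]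
  · rw [show ((1:ℝ)-c)^2 = (c-1)^2 by ring]; ring
  · apply Continuous.intervalIntegrable
    exact (continuous_const.sub continuous_id).div (by continuity) hden

lemma tendsto_K_one {c : ℝ} (hc : c ∈ Ioo (0:ℝ) 1) :
    Tendsto (fun t : ℝ => ∫ x in Ioo (0:ℝ) 1, (c-x)/((c-x)^2+t^2)) (𝓝[>] (0:ℝ))
      (𝓝 (Real.log c - Real.log (1-c))) := by
  have h1 : (0:ℝ) < c := hc.1
  have h2 : (0:ℝ) < 1 - c := by linarith [hc.2]
  have hcont : Tendsto (fun t : ℝ => Real.log (c^2+t^2)/2 - Real.log ((1-c)^2+t^2)/2)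
      (𝓝 0) (𝓝 (Real.log c - Real.log (1-c))) := by
    have hA : Tendsto (fun t : ℝ => Real.log (c^2+t^2)) (𝓝 0) (𝓝 (Real.log (c^2))) := by
      apply (Real.continuousAt_log (by positivity)).tendsto.comp
      have : Continuous fun t : ℝ => c^2 + t^2 := by continuity
      simpa using this.tendsto 0
    have hB : Tendsto (fun t : ℝ => Real.log ((1-c)^2+t^2)) (𝓝 0)
        (𝓝 (Real.log ((1-c)^2))) := by
      apply (Real.continuousAt_log (by positivity)).tendsto.comp
      have : Continuous fun t : ℝ => (1-c)^2 + t^2 := by continuity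
      simpa using this.tendsto 0
    have := (hA.div_const 2).sub (hB.div_const 2)
    rw [show Real.log (c^2)/2 - Real.log ((1-c)^2)/2 = Real.log c - Real.log (1-c) by
      rw [show c^2 = c*c by ring, show (1-c)^2 = (1-c)*(1-c) by ring,
        Real.log_mul h1.ne' h1.ne', Real.log_mul h2.ne' h2.ne']; ring] at this
    exact this
  apply Tendsto.congr' _ (hcont.mono_left nhdsWithin_le_nhds)
  filter_upwards [eventually_mem_nhdsWithin] with t ht
  exact (integral_K_one t ht).symm

lemma u_eq {x : ℝ} (hx : x ∈ Ioo (0:ℝ) 1) :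
    w (-(1/2)) (-(1/2)) x = (Real.sqrt (x*(1-x)))⁻¹ := by
  have h1 : (0:ℝ) < x := hx.1
  have h2 : (0:ℝ) < 1 - x := by linarith [hx.2]
  unfold w
  rw [Real.rpow_neg h1.le, Real.rpow_neg h2.le, ← Real.sqrt_eq_rpow, ← Real.sqrt_eq_rpow,
    ← mul_inv, ← Real.sqrt_mul h1.le]

def HH (c x : ℝ) : ℝ :=
  (2/Real.sqrt (c*(1-c))) * Real.log (Real.sqrt (c*(1-x)) + Real.sqrt (x*(1-c)))

lemma hasDerivAt_HH {c x : ℝ} (hc : c ∈ Ioo (0:ℝ) 1) (hx : x ∈ Ioo (0:ℝ) 1) (hne : x ≠ c) :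
    HasDerivAt (HH c) ((w (-(1/2)) (-(1/2)) x - w (-(1/2)) (-(1/2)) c)/(c-x)) x := by
  have hc0 : (0:ℝ) < c := hc.1
  have hc1 : (0:ℝ) < 1 - c := by linarith [hc.2]
  have hx0 : (0:ℝ) < x := hx.1
  have hx1 : (0:ℝ) < 1 - x := by linarith [hx.2]
  set p := Real.sqrt (c*(1-x)) with hpdef
  set q := Real.sqrt (x*(1-c)) with hqdef
  set r := Real.sqrt (x*(1-x)) with hrdef
  set s := Real.sqrt (c*(1-c)) with hsdef
  have hp0 : 0 < p := Real.sqrt_pos.mpr (by positivity)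
  have hq0 : 0 < q := Real.sqrt_pos.mpr (by positivity)
  have hr0 : 0 < r := Real.sqrt_pos.mpr (by positivity)
  have hs0 : 0 < s := Real.sqrt_pos.mpr (by positivity)
  have hp2 : p^2 = c*(1-x) := Real.sq_sqrt (by positivity)
  have hq2 : q^2 = x*(1-c) := Real.sq_sqrt (by positivity)
  have hr2 : r^2 = x*(1-x) := Real.sq_sqrt (by positivity)
  have hs2 : s^2 = c*(1-c) := Real.sq_sqrt (by positivity)
  have hpq : p*q = s*r := by
    rw [hpdef, hqdef, hsdef, hrdef, ← Real.sqrt_mul (by positivity),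
      ← Real.sqrt_mul (by positivity)]
    ring_nf
  have hdp : HasDerivAt (fun y : ℝ => Real.sqrt (c*(1-y))) (1/(2*p) * (-c)) x := by
    have hinner : HasDerivAt (fun y : ℝ => c*(1-y)) (-c) x := by
      simpa using ((hasDerivAt_id x).const_sub 1).const_mul c
    exact (Real.hasDerivAt_sqrt (by positivity)).comp x hinner
  have hdq : HasDerivAt (fun y : ℝ => Real.sqrt (y*(1-c))) (1/(2*q) * (1-c)) x := by
    have hinner : HasDerivAt (fun y : ℝ => y*(1-c)) (1-c) x := by
      simpa using (hasDerivAt_id x).mul_const (1-c)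
    exact (Real.hasDerivAt_sqrt (by positivity)).comp x hinner
  have hsum := hdp.add hdq
  have hlog := (Real.hasDerivAt_log (by positivity : p + q ≠ 0)).comp x hsum
  have hfin := hlog.const_mul (2/s)
  have hD : HasDerivAt (HH c)
      ((2/s) * ((p+q)⁻¹ * (1/(2*p) * (-c) + 1/(2*q) * (1-c)))) x := hfin
  convert hD using 1
  rw [u_eq hx, u_eq hc, ← hrdef, ← hsdef]
  have hcx : c - x ≠ 0 := sub_ne_zero.mpr (Ne.symm hne)
  have key : ((1-c)*p - c*q) * (p - q) = s^2 - s*r := by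
    rw [hs2, ← hpq]; nlinarith [hp2, hq2]
  have hexp : c - x = (p - q) * (p + q) := by nlinarith [hp2, hq2]
  field_simp
  linear_combination ((s-r)*(p+q)) * hpq - (r*(p+q)) * key - (r*((1-c)*p - c*q)) * hexp

lemma continuousOn_HH {c : ℝ} (hc : c ∈ Ioo (0:ℝ) 1) :
    ContinuousOn (HH c) (Icc (0:ℝ) 1) := by
  have hc0 : (0:ℝ) < c := hc.1
  have hc1 : (0:ℝ) < 1 - c := by linarith [hc.2]
  apply ContinuousOn.mul continuousOn_const
  apply ContinuousOn.log
  · apply Continuous.continuousOn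
    continuity
  · intro x hx
    rcases lt_or_eq_of_le hx.2 with h1 | h1
    · have : 0 < Real.sqrt (c*(1-x)) := Real.sqrt_pos.mpr (by nlinarith)
      positivity
    · subst h1
      have : 0 < Real.sqrt (1*(1-c)) := Real.sqrt_pos.mpr (by nlinarith)
      positivity

lemma arcsine_integral {c : ℝ} (hc : c ∈ Ioo (0:ℝ) 1)
    (hq : IntegrableOn (fun x => (w (-(1/2)) (-(1/2)) x - w (-(1/2)) (-(1/2)) c)/(c-x))
      (Ioo (0:ℝ) 1)) :
    ∫ x in Ioo (0:ℝ) 1, (w (-(1/2)) (-(1/2)) x - w (-(1/2)) (-(1/2)) c)/(c-x)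
      = (Real.sqrt (c*(1-c)))⁻¹ * (Real.log (1-c) - Real.log c) := by
  have hc0 : (0:ℝ) < c := hc.1
  have hc1 : (0:ℝ) < 1 - c := by linarith [hc.2]
  set f : ℝ → ℝ := fun x => (w (-(1/2)) (-(1/2)) x - w (-(1/2)) (-(1/2)) c)/(c-x) with hfdef
  have hi1 : IntervalIntegrable f volume 0 c := by
    rw [intervalIntegrable_iff_integrableOn_Ioo_of_le hc0.le]
    exact hq.mono_set (fun x hx => ⟨hx.1, lt_trans hx.2 hc.2⟩)
  have hi2 : IntervalIntegrable f volume c 1 := by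
    rw [intervalIntegrable_iff_integrableOn_Ioo_of_le hc.2.le]
    exact hq.mono_set (fun x hx => ⟨lt_trans hc0 hx.1, hx.2⟩)
  have h1 : ∫ x in (0:ℝ)..c, f x = HH c c - HH c 0 := by
    apply intervalIntegral.integral_eq_sub_of_hasDeriv_right_of_le hc0.le
      ((continuousOn_HH hc).mono (fun x hx => ⟨hx.1, le_trans hx.2 hc.2.le⟩))
      (fun x hx => ((hasDerivAt_HH hc ⟨hx.1, lt_trans hx.2 hc.2⟩ hx.2.ne).hasDerivWithinAt))
      hi1
  have h2 : ∫ x in c..(1:ℝ), f x = HH c 1 - HH c c := by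
    apply intervalIntegral.integral_eq_sub_of_hasDeriv_right_of_le hc.2.le
      ((continuousOn_HH hc).mono (fun x hx => ⟨le_trans hc0.le hx.1, hx.2⟩))
      (fun x hx => ((hasDerivAt_HH hc ⟨lt_trans hc0 hx.1, hx.2⟩ hx.1.ne').hasDerivWithinAt))
      hi2
  have hsplit : ∫ x in Ioo (0:ℝ) 1, f x = (∫ x in (0:ℝ)..c, f x) + ∫ x in c..(1:ℝ), f x := by
    rw [intervalIntegral.integral_add_adjacent_intervals hi1 hi2,
      intervalIntegral.integral_of_le zero_le_one, integral_Ioc_eq_integral_Ioo]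
  rw [hsplit, h1, h2]
  have hval : HH c 1 - HH c 0 = (Real.sqrt (c*(1-c)))⁻¹ * (Real.log (1-c) - Real.log c) := by
    unfold HH
    rw [show c*(1-(1:ℝ)) = 0 by ring, show (1:ℝ)*(1-c) = 1-c by ring,
      show c*(1-(0:ℝ)) = c by ring, show (0:ℝ)*(1-c) = 0 by ring]
    rw [Real.sqrt_zero, zero_add, add_zero, Real.log_sqrt hc1.le, Real.log_sqrt hc0.le]
    have hs0 : 0 < Real.sqrt (c*(1-c)) := Real.sqrt_pos.mpr (by positivity)
    field_simp
  linarith [hval]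

lemma reduction {a b c t Z : ℝ} (hZ : 0 < Z) (ht0 : 0 < t) (hcIoo : c ∈ Ioo (0:ℝ) 1)
    (hw : IntegrableOn (w a b) (Ioo (0:ℝ) 1)) :
    (∫ x, ((c:ℂ) + (t:ℂ) * Complex.I - (x:ℂ))⁻¹
        ∂(volume.withDensity fun x =>
          ENNReal.ofReal ((Ioo (0:ℝ) 1).indicator (fun x => w a b x / Z) x))).re
      = ((∫ x in Ioo (0:ℝ) 1, (c-x)/((c-x)^2+t^2) * (w a b x - w a b c))
          + w a b c * ∫ x in Ioo (0:ℝ) 1, (c-x)/((c-x)^2+t^2)) / Z := by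
  set μ : Measure ℝ := volume.withDensity fun x =>
    ENNReal.ofReal ((Ioo (0:ℝ) 1).indicator (fun x => w a b x / Z) x) with hμdef
  -- reduction of the μ-integral
  set fC : ℝ → ℂ := fun x => ((c : ℂ) + (t : ℂ) * Complex.I - (x : ℂ))⁻¹ with hfC
  have hfCm : Measurable fC := by
    apply Measurable.inv
    exact (measurable_const.sub Complex.measurable_ofReal)
  have hre : ∀ x : ℝ, (fC x).re = (c-x)/((c-x)^2+t^2) := by
    intro x
    have hzre : ((c : ℂ) + (t : ℂ) * Complex.I - (x : ℂ)).re = c - x := by simp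
    have hzim : ((c : ℂ) + (t : ℂ) * Complex.I - (x : ℂ)).im = t := by simp
    rw [hfC, Complex.inv_re, Complex.normSq_apply, hzre, hzim]
    ring_nf
  have hnorm : ∀ x : ℝ, ‖fC x‖ ≤ t⁻¹ := by
    intro x
    rw [hfC, norm_inv]
    have him : |((c : ℂ) + (t : ℂ) * Complex.I - (x : ℂ)).im| = t := by
      simp [abs_of_pos ht0]
    have h1 : t ≤ ‖(c : ℂ) + (t : ℂ) * Complex.I - (x : ℂ)‖ := by
      calc t = |((c : ℂ) + (t : ℂ) * Complex.I - (x : ℂ)).im| := him.symm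
      _ ≤ _ := by exact Complex.abs_im_le_norm _
    exact inv_anti₀ ht0 h1
  -- density as NNReal
  set ρ : ℝ → NNReal := fun x =>
    (Set.indicator (Set.Ioo (0:ℝ) 1) (fun x => w a b x / Z) x).toNNReal with hρ
  have hρm : Measurable ρ :=
    (((w_meas a b).div measurable_const).indicator measurableSet_Ioo).real_toNNReal
  have hμeq : μ = volume.withDensity (fun x => ((ρ x : NNReal) : ENNReal)) := by
    rw [hμdef]
    congr 1
  have step1 : ∫ x, fC x ∂μ = ∫ x in Ioo (0:ℝ) 1, (w a b x / Z) • fC x := by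
    rw [hμeq, integral_withDensity_eq_integral_smul hρm]
    rw [← integral_indicator measurableSet_Ioo]
    congr 1
    funext x
    by_cases hx : x ∈ Ioo (0:ℝ) 1
    · rw [Set.indicator_of_mem hx, hρ]
      simp only [Set.indicator_of_mem hx]
      rw [NNReal.smul_def, Real.coe_toNNReal _ (div_nonneg (w_nonneg hx) hZ.le)]
    · rw [Set.indicator_of_notMem hx, hρ]
      simp only [Set.indicator_of_notMem hx]
      simp
  have hfi : IntegrableOn (fun x => (w a b x / Z) • fC x) (Ioo (0:ℝ) 1) := by
    refine Integrable.mono' (hw.mul_const (Z⁻¹ * t⁻¹)) ?_ ?_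
    · exact ((((w_meas a b).div measurable_const).smul hfCm).stronglyMeasurable).aestronglyMeasurable
    · filter_upwards [ae_restrict_mem measurableSet_Ioo] with x hx
      rw [norm_smul, Real.norm_eq_abs, abs_of_nonneg (div_nonneg (w_nonneg hx) hZ.le)]
      calc w a b x / Z * ‖fC x‖ ≤ w a b x / Z * t⁻¹ :=
            mul_le_mul_of_nonneg_left (hnorm x) (div_nonneg (w_nonneg hx) hZ.le)
      _ = w a b x * (Z⁻¹ * t⁻¹) := by ring
  have step2 : (∫ x in Ioo (0:ℝ) 1, (w a b x / Z) • fC x).re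
      = ∫ x in Ioo (0:ℝ) 1, (w a b x / Z) * ((c-x)/((c-x)^2+t^2)) := by
    rw [← RCLike.re_eq_complex_re, ← integral_re hfi]
    apply setIntegral_congr_fun measurableSet_Ioo
    intro x hx
    rw [RCLike.re_eq_complex_re]
    show ((w a b x / Z) • fC x).re = _
    rw [Complex.smul_re, hre x, smul_eq_mul]
  have hKc : Continuous fun x : ℝ => (c-x)/((c-x)^2+t^2) := by
    apply (continuous_const.sub continuous_id).div
      (((continuous_const.sub continuous_id).pow 2).add continuous_const)
    intro x
    exact ne_of_gt (show (0:ℝ) < (c-x)^2+t^2 by nlinarith [sq_nonneg (c-x), pow_pos ht0 2])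
  have hK_int : IntegrableOn (fun x : ℝ => (c-x)/((c-x)^2+t^2)) (Ioo (0:ℝ) 1) :=
    (hKc.integrableOn_Icc (a := 0) (b := 1)).mono_set Ioo_subset_Icc_self
  have hKw_int : IntegrableOn
      (fun x => (c-x)/((c-x)^2+t^2) * (w a b x - w a b c)) (Ioo (0:ℝ) 1) := by
    refine Integrable.mono' (g := fun x => (w a b x + w a b c) * (1/(2*t)))
      (((hw.add (integrableOn_const (by simp))).mul_const (1/(2*t))) :
        Integrable (fun x => (w a b x + w a b c) * (1/(2*t))) _) ?_ ?_
    · exact ((hKc.measurable.mul ((w_meas a b).sub measurable_const)).stronglyMeasurable).aestronglyMeasurable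
    · filter_upwards [ae_restrict_mem measurableSet_Ioo] with x hx
      rw [Real.norm_eq_abs, abs_mul]
      have hKb : |(c-x)/((c-x)^2+t^2)| ≤ 1/(2*t) := by
        rw [abs_div, abs_of_pos (show (0:ℝ) < (c-x)^2+t^2 by
            nlinarith [sq_nonneg (c-x), pow_pos ht0 2]),
          div_le_div_iff₀ (by nlinarith [sq_nonneg (c-x), pow_pos ht0 2]) (by linarith)]
        nlinarith [sq_nonneg (|c-x| - t), sq_abs (c-x), abs_nonneg (c-x)]
      have habs : |w a b x - w a b c| ≤ w a b x + w a b c := by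
        rw [abs_sub_le_iff]
        constructor <;> nlinarith [w_pos (a:=a) (b:=b) hx, w_pos (a:=a) (b:=b) hcIoo]
      calc |(c-x)/((c-x)^2+t^2)| * |w a b x - w a b c|
          ≤ (1/(2*t)) * (w a b x + w a b c) :=
            mul_le_mul hKb habs (abs_nonneg _) (one_div_nonneg.mpr (by linarith))
      _ = (w a b x + w a b c) * (1/(2*t)) := by ring
  have step3 : ∫ x in Ioo (0:ℝ) 1, (w a b x / Z) * ((c-x)/((c-x)^2+t^2))
      = ((∫ x in Ioo (0:ℝ) 1, (c-x)/((c-x)^2+t^2) * (w a b x - w a b c))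
        + w a b c * ∫ x in Ioo (0:ℝ) 1, (c-x)/((c-x)^2+t^2)) / Z := by
    have hpt : ∀ x : ℝ, (w a b x / Z) * ((c-x)/((c-x)^2+t^2))
        = ((c-x)/((c-x)^2+t^2) * (w a b x - w a b c)
          + w a b c * ((c-x)/((c-x)^2+t^2))) / Z := by
      intro x; ring
    simp_rw [hpt]
    rw [integral_div, integral_add hKw_int (hK_int.const_mul (w a b c)), integral_const_mul]
  rw [step1, step2, step3]


end St17

open St17

/-- Let `a ≥ −1/2`, `−1 < b ≤ −1/2`, and let `μ` be the Jacobi-type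
probability measure on `ℝ` with density `x^a (1−x)^b / Z` on `(0,1)`, where
`Z = ∫₀¹ x^a (1−x)^b dx`.  Then for every `x₀ ∈ (0,1)` the boundary values from the
upper half plane of the real part of the Cauchy transform of `μ` exist and are
nonpositive: there is `L ≤ 0` with `Re G_μ(x₀ + i t) → L` as `t → 0⁺`. -/
theorem statement17 (a b : ℝ) (ha : -(1 / 2 : ℝ) ≤ a) (hb1 : (-1 : ℝ) < b)
    (hb2 : b ≤ -(1 / 2 : ℝ)) :
    let Z : ℝ := ∫ x in Set.Ioo (0 : ℝ) 1, x ^ a * (1 - x) ^ b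
    let μ : Measure ℝ := volume.withDensity fun x =>
      ENNReal.ofReal (Set.indicator (Set.Ioo (0 : ℝ) 1)
        (fun x => x ^ a * (1 - x) ^ b / Z) x)
    ∀ x₀ ∈ Set.Ioo (0 : ℝ) 1, ∃ L : ℝ, L ≤ 0 ∧
      Tendsto (fun t : ℝ => (∫ x, ((x₀ : ℂ) + (t : ℂ) * Complex.I - (x : ℂ))⁻¹ ∂μ).re)
        (𝓝[>] (0 : ℝ)) (𝓝 L) := by
  intro Z μ c hc
  have hZdef : Z = ∫ x in Ioo (0:ℝ) 1, w a b x := rfl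
  have hμdef : μ = volume.withDensity (fun x =>
      ENNReal.ofReal (Set.indicator (Set.Ioo (0:ℝ) 1) (fun x => w a b x / Z) x)) := rfl
  clear_value Z μ
  obtain ⟨hc0, hc1'⟩ := hc
  have hc1 : (0:ℝ) < 1 - c := by linarith
  have hcIoo : c ∈ Ioo (0:ℝ) 1 := ⟨hc0, by linarith⟩
  have ha' : (-1:ℝ) < a := by linarith
  have hZ : 0 < Z := by rw [hZdef]; exact Z_pos ha' hb1
  -- weights
  set uu : ℝ → ℝ := w (-(1/2)) (-(1/2)) with huu
  set gg : ℝ → ℝ := w (a+1/2) (b+1/2) with hgg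
  have hw : IntegrableOn (w a b) (Ioo (0:ℝ) 1) := integrableOn_w ha' hb1
  have hu : IntegrableOn uu (Ioo (0:ℝ) 1) := integrableOn_w (by norm_num) (by norm_num)
  have hqw := integrableOn_diffquot hw hcIoo
  have hqu := integrableOn_diffquot hu hcIoo
  -- factorization w = gg * uu on Ioo
  have hfact : ∀ x ∈ Ioo (0:ℝ) 1, w a b x = gg x * uu x := by
    intro x hx
    have hx0 : (0:ℝ) < x := hx.1
    have hx1 : (0:ℝ) < 1 - x := by linarith [hx.2]
    simp only [hgg, huu, w]
    rw [show x^a = x^(a+1/2) * x^(-(1/2):ℝ) by rw [← Real.rpow_add hx0]; norm_num,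
      show (1-x)^b = (1-x)^(b+1/2) * (1-x)^(-(1/2):ℝ) by rw [← Real.rpow_add hx1]; norm_num]
    ring
  -- monotonicity of gg
  have hgmono : ∀ x ∈ Ioo (0:ℝ) 1, ∀ y ∈ Ioo (0:ℝ) 1, x ≤ y → gg x ≤ gg y := by
    intro x hx y hy hxy
    have hx1 : (0:ℝ) < 1 - x := by linarith [hx.2]
    have hy1 : (0:ℝ) < 1 - y := by linarith [hy.2]
    have h1 : x^(a+1/2) ≤ y^(a+1/2) :=
      Real.rpow_le_rpow hx.1.le hxy (by linarith)
    have h2 : (1-x)^(b+1/2) ≤ (1-y)^(b+1/2) :=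
      Real.rpow_le_rpow_of_nonpos hy1 (by linarith) (by linarith)
    simp only [hgg, w]
    exact mul_le_mul h1 h2 (Real.rpow_nonneg hx1.le _) (Real.rpow_nonneg hy.1.le _)
  -- B and its sign
  set B : ℝ := ∫ x in Ioo (0:ℝ) 1,
      ((w a b x - w a b c)/(c-x) - gg c * ((uu x - uu c)/(c-x))) with hB
  have hBle : B ≤ 0 := by
    apply setIntegral_nonpos measurableSet_Ioo
    intro x hx
    have heq : (w a b x - w a b c)/(c-x) - gg c * ((uu x - uu c)/(c-x))
        = ((gg x - gg c) * uu x)/(c-x) := by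
      rw [mul_div_assoc']
      rw [div_sub_div_same]
      congr 1
      rw [hfact x hx, hfact c hcIoo]
      ring
    rw [heq]
    have hux : 0 < uu x := w_pos hx
    rcases lt_trichotomy x c with h | h | h
    · apply div_nonpos_of_nonpos_of_nonneg
      · have := hgmono x hx c hcIoo h.le
        nlinarith
      · linarith
    · subst h; simp
    · apply div_nonpos_of_nonneg_of_nonpos
      · have := hgmono c hcIoo x hx h.le
        nlinarith
      · linarith
  -- split identity
  have hDsplit : ∫ x in Ioo (0:ℝ) 1, (w a b x - w a b c)/(c-x)
      = B + gg c * ∫ x in Ioo (0:ℝ) 1, (uu x - uu c)/(c-x) := by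
    rw [hB, integral_sub hqw ((hqu.const_mul (gg c)))]
    rw [integral_const_mul]
    ring
  have harc := arcsine_integral hcIoo hqu
  have huc : uu c = (Real.sqrt (c*(1-c)))⁻¹ := u_eq hcIoo
  have hwc : w a b c = gg c * uu c := hfact c hcIoo
  -- value of the limit
  have hval : (∫ x in Ioo (0:ℝ) 1, (w a b x - w a b c)/(c-x))
      + w a b c * (Real.log c - Real.log (1-c)) = B := by
    rw [hDsplit, harc, hwc, huc]
    ring
  refine ⟨B / Z, div_nonpos_of_nonpos_of_nonneg hBle hZ.le, ?_⟩
  -- the limit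
  have hTen : Tendsto (fun t : ℝ =>
      ((∫ x in Ioo (0:ℝ) 1, (c-x)/((c-x)^2+t^2) * (w a b x - w a b c))
        + w a b c * ∫ x in Ioo (0:ℝ) 1, (c-x)/((c-x)^2+t^2)) / Z)
      (𝓝[>] (0:ℝ)) (𝓝 (B / Z)) := by
    have := ((tendsto_Kt hcIoo hqw).add ((tendsto_K_one hcIoo).const_mul (w a b c))).div_const Z
    rwa [hval] at this
  apply Tendsto.congr' _ hTen
  filter_upwards [eventually_mem_nhdsWithin] with t (ht : t ∈ Ioi (0:ℝ))
  have ht0 : (0:ℝ) < t := ht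
  rw [hμdef]
  exact (reduction hZ ht0 hcIoo hw).symm
end
end

section
/- Let μ be the uniform probability measure on [0, 1] (Lebesgue measure restricted to [0,1]). For every z ∈ ℂ with Re z > 1, setting u := ∫₀¹ (z − x)^{−1} dx ∈ ℂ, one has Re(u·1) − ∫₀¹ log|1 − x| dx > Re(u·z) − ∫₀¹ log|z − x| dx; equivalently, since ∫₀¹ log|1 − x| dx = −1, Re(u) + 1 > Re(u·z) − ∫₀¹ log|z − x| dx. -/
open MeasureTheory Filter Topology intervalIntegral

noncomputable section

lemma aux_integral_log01 : (∫ x in (0:ℝ)..1, Real.log x) = -1 := by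
  have hcont : ContinuousOn (fun x : ℝ => x - x * Real.log x) (Set.uIcc (0:ℝ) 1) :=
    (continuous_id.sub Real.continuous_mul_log).continuousOn
  have hderiv : ∀ x ∈ Set.Ioo (min (0:ℝ) 1) (max (0:ℝ) 1),
      HasDerivAt (fun x : ℝ => x - x * Real.log x) (-Real.log x) x := by
    intro x hx
    rw [min_eq_left zero_le_one, max_eq_right zero_le_one] at hx
    have hx0 : x ≠ 0 := ne_of_gt hx.1
    have h := (hasDerivAt_id' x).sub (Real.hasDerivAt_mul_log hx0)
    exact (by simpa using h : HasDerivAt ((fun x : ℝ => x) - fun x : ℝ => x * Real.log x) (-Real.log x) x)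
  have hpos : ∀ x ∈ Set.Ioo (min (0:ℝ) 1) (max (0:ℝ) 1), 0 ≤ -Real.log x := by
    intro x hx
    rw [min_eq_left zero_le_one, max_eq_right zero_le_one] at hx
    have := Real.log_nonpos hx.1.le hx.2.le
    linarith
  have hint : IntervalIntegrable (fun x : ℝ => -Real.log x) volume 0 1 :=
    intervalIntegrable_deriv_of_nonneg hcont hderiv hpos
  have key := intervalIntegral.integral_eq_sub_of_hasDeriv_right hcont
      (fun x hx => (hderiv x hx).hasDerivWithinAt) hint
  have : (∫ x in (0:ℝ)..1, -Real.log x) = 1 := by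
    rw [key]; simp
  have h2 : (∫ x in (0:ℝ)..1, -Real.log x) = -∫ x in (0:ℝ)..1, Real.log x := by
    simp [intervalIntegral.integral_neg]
  linarith [h2 ▸ this]

/-- For the uniform measure on `[0,1]` and any `z ∈ ℂ` with
`Re z > 1`, setting `u := ∫₀¹ (z − x)⁻¹ dx`, one has
`Re(u·1) − ∫₀¹ log|1 − x| dx > Re(u·z) − ∫₀¹ log|z − x| dx`. -/
theorem statement18 (z : ℂ) (hz : 1 < z.re) :
    let u : ℂ := ∫ x in (0 : ℝ)..1, (z - (x : ℂ))⁻¹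
    (u * z).re - (∫ x in (0 : ℝ)..1, Real.log ‖z - (x : ℂ)‖) <
      (u * 1).re - ∫ x in (0 : ℝ)..1, Real.log |1 - x| := by
  intro u
  have hre : ∀ x ∈ Set.uIcc (0:ℝ) 1, 0 < (z - (x:ℂ)).re := by
    intro x hx
    rw [Set.uIcc_of_le zero_le_one] at hx
    simp only [Complex.sub_re, Complex.ofReal_re]
    linarith [hx.2]
  have hmem : ∀ x ∈ Set.uIcc (0:ℝ) 1, (z - (x:ℂ)) ∈ Complex.slitPlane :=
    fun x hx => Complex.mem_slitPlane_iff.mpr (Or.inl (hre x hx))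
  have hne : ∀ x ∈ Set.uIcc (0:ℝ) 1, (z - (x:ℂ)) ≠ 0 := by
    intro x hx h
    have := hre x hx
    rw [h] at this
    simp at this
  have hcontsub : ContinuousOn (fun x : ℝ => z - (x:ℂ)) (Set.uIcc (0:ℝ) 1) :=
    (continuous_const.sub Complex.continuous_ofReal).continuousOn
  -- derivative building blocks
  have h1 : ∀ x : ℝ, HasDerivAt (fun w : ℂ => z - w) (-1) (x:ℂ) := by
    intro x
    simpa using (hasDerivAt_id ((x:ℂ))).const_sub z
  have h2 : ∀ x ∈ Set.uIcc (0:ℝ) 1,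
      HasDerivAt (fun w : ℂ => Complex.log (z - w)) ((z - (x:ℂ))⁻¹ * (-1)) (x:ℂ) := by
    intro x hx
    exact (Complex.hasDerivAt_log (hmem x hx)).comp (x:ℂ) (h1 x)
  -- integrability of (z-x)⁻¹
  have hint_inv : IntervalIntegrable (fun x : ℝ => (z - (x:ℂ))⁻¹) volume 0 1 :=
    (hcontsub.inv₀ hne).intervalIntegrable
  -- value of u
  have hu : u = Complex.log z - Complex.log (z - 1) := by
    have hd : ∀ x ∈ Set.uIcc (0:ℝ) 1,
        HasDerivAt (fun x : ℝ => -Complex.log (z - (x:ℂ))) ((z - (x:ℂ))⁻¹) x := by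
      intro x hx
      have := ((h2 x hx).neg).comp_ofReal
      simpa using this
    have := intervalIntegral.integral_eq_sub_of_hasDerivAt hd hint_inv
    show (∫ x in (0:ℝ)..1, (z - (x:ℂ))⁻¹) = _
    rw [this]
    push_cast
    rw [sub_zero]
    ring
  -- integrability of log (z - x)
  have hint_log : IntervalIntegrable (fun x : ℝ => Complex.log (z - (x:ℂ))) volume 0 1 :=
    (hcontsub.clog hmem).intervalIntegrable
  -- value of complex log integral
  have hC : (∫ x in (0:ℝ)..1, Complex.log (z - (x:ℂ)))
      = z * Complex.log z - (z - 1) * Complex.log (z - 1) - 1 := by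
    have hd : ∀ x ∈ Set.uIcc (0:ℝ) 1,
        HasDerivAt (fun x : ℝ => (z - (x:ℂ)) - (z - (x:ℂ)) * Complex.log (z - (x:ℂ)))
          (Complex.log (z - (x:ℂ))) x := by
      intro x hx
      have hprod := (h1 x).mul (h2 x hx)
      have hsub := (h1 x).sub hprod
      have := hsub.comp_ofReal
      have hcancel : (z - (x:ℂ)) * ((z - (x:ℂ))⁻¹ * (-1)) = -1 := by
        rw [← mul_assoc, mul_inv_cancel₀ (hne x hx), one_mul]
      convert this using 1
      · rfl
      rw [hcancel]
      ring
    rw [intervalIntegral.integral_eq_sub_of_hasDerivAt hd hint_log]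
    push_cast
    simp only [sub_zero]
    ring
  -- value of real log-abs integral
  have hL : (∫ x in (0:ℝ)..1, Real.log ‖z - (x:ℂ)‖)
      = (z * Complex.log z - (z - 1) * Complex.log (z - 1) - 1).re := by
    have e : (∫ x in (0:ℝ)..1, Real.log ‖z - (x:ℂ)‖)
        = ∫ x in (0:ℝ)..1, Complex.reCLM (Complex.log (z - (x:ℂ))) := by
      apply intervalIntegral.integral_congr
      intro x _
      simp [Complex.log_re]
    rw [e, Complex.reCLM.intervalIntegral_comp_comm hint_log, hC]
    rfl
  -- value of ∫ log |1 - x|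
  have hL2 : (∫ x in (0:ℝ)..1, Real.log |1 - x|) = -1 := by
    have heq : Set.EqOn (fun x : ℝ => Real.log |1 - x|) (fun x : ℝ => Real.log (1 - x))
        (Set.uIcc (0:ℝ) 1) := by
      intro x hx
      rw [Set.uIcc_of_le zero_le_one] at hx
      simp only
      rw [abs_of_nonneg (by linarith [hx.2] : (0:ℝ) ≤ 1 - x)]
    rw [intervalIntegral.integral_congr heq]
    have hcs := intervalIntegral.integral_comp_sub_left (a := (0:ℝ)) (b := 1)
      (fun x : ℝ => Real.log x) 1
    simp only [sub_self, sub_zero] at hcs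
    rw [hcs, aux_integral_log01]
  -- final algebra
  set A := Complex.log z with hA
  set B := Complex.log (z - 1) with hB
  rw [hu, hL, hL2]
  have e1 : (A - B) * z - (z * A - (z - 1) * B - 1) = 1 - B := by ring
  have e2 : ((A - B) * z).re - (z * A - (z - 1) * B - 1).re = 1 - B.re := by
    rw [← Complex.sub_re, e1, Complex.sub_re, Complex.one_re]
  rw [e2]
  have e3 : ((A - B) * 1).re = A.re - B.re := by
    simp [Complex.sub_re]
  rw [e3]
  have hApos : 0 < A.re := by
    rw [hA, Complex.log_re]
    exact Real.log_pos (lt_of_lt_of_le hz (Complex.re_le_norm z))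
  linarith
end
end

section
/- Let k ≥ 1, let 𝔠 = (𝔠₁, …, 𝔠_k) ∈ ℝ^k with 𝔠_i ≠ 0 for every i, and let ξ ≥ 0 and c > 0 be real numbers. Then there exist constants C₂ > C₁ > 0 such that for every integer N ≥ 1 and every u = (u₁, …, u_k) ∈ ℂ^k satisfying min_{i ≠ j} ( |u_i − u_j|, |(u_i + N^{−ξ} 𝔠_i) − (u_j + N^{−ξ} 𝔠_j)|, |(u_i + N^{−ξ} 𝔠_i) − u_j| ) ≥ c·N^{−ξ}, one has C₁·N^{−kξ} ≤ | D(u + N^{−ξ} 𝔠; −u) / ( Δ(u + N^{−ξ} 𝔠) · Δ(−u) ) | ≤ C₂·N^{−kξ}, where u + N^{−ξ} 𝔠 := (u₁ + N^{−ξ} 𝔠₁, …, u_k + N^{−ξ} 𝔠_k). (For k = 1 the separation condition is vacuous.) -/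
open Complex Finset Filter Topology

noncomputable section

/-- Vandermonde product `Δ(w) = ∏_{i<j} (w i - w j)`. -/
def vprod {m : ℕ} (w : Fin m → ℂ) : ℂ :=
  ∏ i : Fin m, ∏ j : Fin m, if i < j then w i - w j else 1

/-- `D(x;y) = ∏_{i,j} (x i + y j)`. -/
def dprod {m n : ℕ} (x : Fin m → ℂ) (y : Fin n → ℂ) : ℂ :=
  ∏ i : Fin m, ∏ j : Fin n, (x i + y j)

lemma core19 {c M ε : ℝ} (hc : 0 < c) (hM : 0 ≤ M) (hε : 0 < ε) {z w : ℂ}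
    (hz : c * ε ≤ ‖z‖) (hw : c * ε ≤ ‖w‖)
    (hd : ‖z - w‖ ≤ M * ε) :
    c / (c + M) * ‖w‖ ≤ ‖z‖ ∧
      ‖z‖ ≤ (c + M) / c * ‖w‖ := by
  clear hε
  have t1 : ‖z‖ ≤ ‖w‖ + ‖z - w‖ := by
    calc ‖z‖ = ‖w + (z - w)‖ := by ring_nf
    _ ≤ _ := norm_add_le _ _
  have t2 : ‖w‖ ≤ ‖z‖ + ‖z - w‖ := by
    calc ‖w‖ = ‖z + (w - z)‖ := by ring_nf
    _ ≤ ‖z‖ + ‖w - z‖ := norm_add_le _ _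
    _ = _ := by rw [norm_sub_rev]
  constructor
  · rw [div_mul_eq_mul_div, div_le_iff₀ (by linarith : (0:ℝ) < c + M)]
    nlinarith [mul_le_mul_of_nonneg_left t2 hc.le, mul_le_mul_of_nonneg_left hd hc.le,
      mul_le_mul_of_nonneg_left hz hM]
  · rw [div_mul_eq_mul_div, le_div_iff₀ hc]
    nlinarith [mul_le_mul_of_nonneg_left t1 hc.le, mul_le_mul_of_nonneg_left hd hc.le,
      mul_le_mul_of_nonneg_left hw hM]

lemma prod_pair_split19 {γ : Type*} [CommMonoid γ] {n : ℕ} (f : Fin n → Fin n → γ) :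
    ∏ i, ∏ j, f i j =
      (∏ i, f i i) *
        ((∏ p ∈ (univ ×ˢ univ : Finset (Fin n × Fin n)).filter fun p => p.1 < p.2, f p.1 p.2) *
          (∏ p ∈ (univ ×ˢ univ : Finset (Fin n × Fin n)).filter fun p => p.1 < p.2, f p.2 p.1)) := by
  classical
  have h0 : ∏ i, ∏ j, f i j = ∏ p ∈ (univ ×ˢ univ : Finset (Fin n × Fin n)), f p.1 p.2 :=
    (Finset.prod_product' _ _ _).symm
  have h1 := Finset.prod_filter_mul_prod_filter_not (univ ×ˢ univ : Finset (Fin n × Fin n))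
    (fun p => p.1 = p.2) (fun p => f p.1 p.2)
  have h2 := Finset.prod_filter_mul_prod_filter_not
    ((univ ×ˢ univ : Finset (Fin n × Fin n)).filter fun p => ¬ p.1 = p.2)
    (fun p => p.1 < p.2) (fun p => f p.1 p.2)
  have e1 : ((univ ×ˢ univ : Finset (Fin n × Fin n)).filter fun p => ¬ p.1 = p.2).filter
      (fun p => p.1 < p.2) = (univ ×ˢ univ).filter fun p => p.1 < p.2 := by
    rw [Finset.filter_filter]
    apply Finset.filter_congr
    intro p _
    simp only [Fin.lt_def, Fin.ext_iff, eq_iff_iff]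
    omega
  have e2 : ((univ ×ˢ univ : Finset (Fin n × Fin n)).filter fun p => ¬ p.1 = p.2).filter
      (fun p => ¬ p.1 < p.2) = (univ ×ˢ univ).filter fun p => p.2 < p.1 := by
    rw [Finset.filter_filter]
    apply Finset.filter_congr
    intro p _
    simp only [Fin.lt_def, Fin.ext_iff, eq_iff_iff, not_lt]
    omega
  have e3 : ∏ p ∈ (univ ×ˢ univ : Finset (Fin n × Fin n)).filter (fun p => p.1 = p.2),
      f p.1 p.2 = ∏ i, f i i := by
    refine Finset.prod_nbij' (fun p => p.1) (fun i => (i, i)) ?_ ?_ ?_ ?_ ?_ <;> simp +contextual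
  have e4 : ∏ p ∈ (univ ×ˢ univ : Finset (Fin n × Fin n)).filter (fun p => p.2 < p.1),
      f p.1 p.2 = ∏ p ∈ (univ ×ˢ univ : Finset (Fin n × Fin n)).filter (fun p => p.1 < p.2),
      f p.2 p.1 := by
    refine Finset.prod_nbij' Prod.swap Prod.swap ?_ ?_ ?_ ?_ ?_ <;> simp +contextual
  rw [h0, ← h1, ← h2, e1, e2, e3, e4]

lemma vprod_eq19 {n : ℕ} (w : Fin n → ℂ) :
    vprod w = ∏ p ∈ (univ ×ˢ univ : Finset (Fin n × Fin n)).filter fun p => p.1 < p.2,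
      (w p.1 - w p.2) := by
  simp only [vprod]
  rw [← Finset.prod_product', Finset.prod_filter]

set_option maxHeartbeats 1000000 in
/-- Two-sided bound on the Cauchy-determinant prefactor: there are
constants `C₂ > C₁ > 0` such that for all `N ≥ 1` and all `u ∈ ℂ^k` whose entries (and
their `N^{-ξ}𝔠`-shifts) are `c N^{-ξ}`-separated,
`C₁ N^{-kξ} ≤ |D(u + N^{-ξ}𝔠; -u)/(Δ(u + N^{-ξ}𝔠) Δ(-u))| ≤ C₂ N^{-kξ}`.
Here the number of variables is `k + 1 ≥ 1`. -/
theorem statement19 (k : ℕ) (𝔠 : Fin (k + 1) → ℝ) (h𝔠 : ∀ i, 𝔠 i ≠ 0)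
    (ξ : ℝ) (hξ : 0 ≤ ξ) (c : ℝ) (hc : 0 < c) :
    ∃ C₁ C₂ : ℝ, 0 < C₁ ∧ C₁ < C₂ ∧
      ∀ N : ℕ, 1 ≤ N → ∀ u : Fin (k + 1) → ℂ,
        (∀ i j : Fin (k + 1), i ≠ j →
          c * (N : ℝ) ^ (-ξ) ≤ ‖u i - u j‖ ∧
          c * (N : ℝ) ^ (-ξ) ≤
            ‖(u i + (((N : ℝ) ^ (-ξ) * 𝔠 i : ℝ) : ℂ)) -
              (u j + (((N : ℝ) ^ (-ξ) * 𝔠 j : ℝ) : ℂ))‖ ∧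
          c * (N : ℝ) ^ (-ξ) ≤
            ‖(u i + (((N : ℝ) ^ (-ξ) * 𝔠 i : ℝ) : ℂ)) - u j‖) →
        C₁ * (N : ℝ) ^ (-((k : ℝ) + 1) * ξ) ≤
            ‖dprod (fun i => u i + (((N : ℝ) ^ (-ξ) * 𝔠 i : ℝ) : ℂ)) (fun j => -u j) /
                (vprod (fun i => u i + (((N : ℝ) ^ (-ξ) * 𝔠 i : ℝ) : ℂ)) *
                  vprod fun j => -u j)‖ ∧
          ‖dprod (fun i => u i + (((N : ℝ) ^ (-ξ) * 𝔠 i : ℝ) : ℂ)) (fun j => -u j) /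
                (vprod (fun i => u i + (((N : ℝ) ^ (-ξ) * 𝔠 i : ℝ) : ℂ)) *
                  vprod fun j => -u j)‖ ≤
            C₂ * (N : ℝ) ^ (-((k : ℝ) + 1) * ξ) := by
  classical
  have hPprodpos : (0:ℝ) < ∏ i, |𝔠 i| := Finset.prod_pos fun i _ => abs_pos.2 (h𝔠 i)
  set Pc : ℝ := ∏ i, |𝔠 i| with hPc
  set M : ℝ := ∑ i, |𝔠 i| with hMdef
  have hM0 : 0 ≤ M := Finset.sum_nonneg fun i _ => abs_nonneg _
  have hMi : ∀ i, |𝔠 i| ≤ M := fun i =>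
    Finset.single_le_sum (fun j _ => abs_nonneg (𝔠 j)) (mem_univ i)
  set A : ℝ := c / (c + M) with hAdef
  set B : ℝ := (c + M) / c with hBdef
  have hcM : (0:ℝ) < c + M := by linarith
  have hA0 : 0 < A := div_pos hc hcM
  have hA1 : A ≤ 1 := by rw [hAdef, div_le_one hcM]; linarith
  have hB1 : 1 ≤ B := by rw [hBdef, le_div_iff₀ hc]; linarith
  have hB0 : (0:ℝ) ≤ B := by linarith
  set m : ℕ := (k+1)*(k+1) with hm
  refine ⟨Pc * (A ^ m * A ^ m), Pc * (B ^ m * B ^ m) + 1,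
    mul_pos hPprodpos (mul_pos (pow_pos hA0 _) (pow_pos hA0 _)), ?_, ?_⟩
  · have hab : A ^ m ≤ B ^ m := pow_le_pow_left₀ hA0.le (hA1.trans hB1) _
    have h2 : A ^ m * A ^ m ≤ B ^ m * B ^ m :=
      mul_le_mul hab hab (pow_nonneg hA0.le _) (pow_nonneg hB0 _)
    have h3 := mul_le_mul_of_nonneg_left h2 hPprodpos.le
    linarith
  · intro N hN u hu
    have hNpos : (0:ℝ) < N := by exact_mod_cast hN
    set ε : ℝ := (N:ℝ) ^ (-ξ) with hεdef
    have hε : 0 < ε := Real.rpow_pos_of_pos hNpos _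
    set x : Fin (k+1) → ℂ := fun i => u i + (((ε * 𝔠 i : ℝ)) : ℂ) with hx
    set S := (univ ×ˢ univ : Finset (Fin (k+1) × Fin (k+1))).filter (fun p => p.1 < p.2) with hS
    have hScard : S.card ≤ m := by
      rw [hS, hm]
      refine (Finset.card_filter_le _ _).trans ?_
      simp
    have hmem : ∀ p ∈ S, p.1 < p.2 := by
      intro p hp
      rw [hS, Finset.mem_filter] at hp
      exact hp.2
    set Q₁ : ℝ := ∏ p ∈ S, ‖x p.1 - x p.2‖ with hQ1
    set Q₂ : ℝ := ∏ p ∈ S, ‖u p.2 - u p.1‖ with hQ2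
    set G₁ : ℝ := ∏ p ∈ S, ‖x p.1 - u p.2‖ with hG1
    set G₂ : ℝ := ∏ p ∈ S, ‖x p.2 - u p.1‖ with hG2
    have hb1 : ∀ p ∈ S, A * ‖x p.1 - x p.2‖ ≤ ‖x p.1 - u p.2‖ ∧
        ‖x p.1 - u p.2‖ ≤ B * ‖x p.1 - x p.2‖ := by
      intro p hp
      have hne : p.1 ≠ p.2 := ne_of_lt (hmem p hp)
      obtain ⟨h1, h2, h3⟩ := hu p.1 p.2 hne
      have hd : ‖(x p.1 - u p.2) - (x p.1 - x p.2)‖ ≤ M * ε := by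
        have he : (x p.1 - u p.2) - (x p.1 - x p.2) = ((ε * 𝔠 p.2 : ℝ) : ℂ) := by
          simp only [hx]; ring
        rw [he, Complex.norm_real, Real.norm_eq_abs, abs_mul, abs_of_pos hε]
        calc ε * |𝔠 p.2| ≤ ε * M := mul_le_mul_of_nonneg_left (hMi p.2) hε.le
        _ = M * ε := mul_comm _ _
      refine core19 hc hM0 hε ?_ ?_ hd
      · simp only [hx]; exact h3
      · simp only [hx]; exact h2
    have hb2 : ∀ p ∈ S, A * ‖u p.2 - u p.1‖ ≤ ‖x p.2 - u p.1‖ ∧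
        ‖x p.2 - u p.1‖ ≤ B * ‖u p.2 - u p.1‖ := by
      intro p hp
      have hne : p.2 ≠ p.1 := (ne_of_lt (hmem p hp)).symm
      obtain ⟨h1, h2, h3⟩ := hu p.2 p.1 hne
      have hd : ‖(x p.2 - u p.1) - (u p.2 - u p.1)‖ ≤ M * ε := by
        have he : (x p.2 - u p.1) - (u p.2 - u p.1) = ((ε * 𝔠 p.2 : ℝ) : ℂ) := by
          simp only [hx]; ring
        rw [he, Complex.norm_real, Real.norm_eq_abs, abs_mul, abs_of_pos hε]
        calc ε * |𝔠 p.2| ≤ ε * M := mul_le_mul_of_nonneg_left (hMi p.2) hε.le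
        _ = M * ε := mul_comm _ _
      refine core19 hc hM0 hε ?_ ?_ hd
      · simp only [hx]; exact h3
      · exact h1
    have hQ1pos : 0 < Q₁ := by
      rw [hQ1]
      refine Finset.prod_pos fun p hp => ?_
      have h2 := (hu p.1 p.2 (ne_of_lt (hmem p hp))).2.1
      simp only [hx]
      exact lt_of_lt_of_le (mul_pos hc hε) h2
    have hQ2pos : 0 < Q₂ := by
      rw [hQ2]
      refine Finset.prod_pos fun p hp => ?_
      have h2 := (hu p.2 p.1 (ne_of_lt (hmem p hp)).symm).1
      exact lt_of_lt_of_le (mul_pos hc hε) h2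
    have hQ1nn : 0 ≤ Q₁ := hQ1pos.le
    have hQ2nn : 0 ≤ Q₂ := hQ2pos.le
    have hG1_lo : A ^ m * Q₁ ≤ G₁ := by
      calc A ^ m * Q₁ ≤ A ^ S.card * Q₁ :=
            mul_le_mul_of_nonneg_right (pow_le_pow_of_le_one hA0.le hA1 hScard) hQ1nn
      _ = ∏ p ∈ S, (A * ‖x p.1 - x p.2‖) := by
            rw [Finset.prod_mul_distrib, Finset.prod_const, hQ1]
      _ ≤ G₁ := by
            rw [hG1]
            exact Finset.prod_le_prod
              (fun p hp => mul_nonneg hA0.le (norm_nonneg _))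
              (fun p hp => (hb1 p hp).1)
    have hG1_hi : G₁ ≤ B ^ m * Q₁ := by
      calc G₁ ≤ ∏ p ∈ S, (B * ‖x p.1 - x p.2‖) := by
            rw [hG1]
            exact Finset.prod_le_prod
              (fun p hp => norm_nonneg _)
              (fun p hp => (hb1 p hp).2)
      _ = B ^ S.card * Q₁ := by rw [Finset.prod_mul_distrib, Finset.prod_const, hQ1]
      _ ≤ B ^ m * Q₁ :=
            mul_le_mul_of_nonneg_right (pow_le_pow_right₀ hB1 hScard) hQ1nn
    have hG2_lo : A ^ m * Q₂ ≤ G₂ := by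
      calc A ^ m * Q₂ ≤ A ^ S.card * Q₂ :=
            mul_le_mul_of_nonneg_right (pow_le_pow_of_le_one hA0.le hA1 hScard) hQ2nn
      _ = ∏ p ∈ S, (A * ‖u p.2 - u p.1‖) := by
            rw [Finset.prod_mul_distrib, Finset.prod_const, hQ2]
      _ ≤ G₂ := by
            rw [hG2]
            exact Finset.prod_le_prod
              (fun p hp => mul_nonneg hA0.le (norm_nonneg _))
              (fun p hp => (hb2 p hp).1)
    have hG2_hi : G₂ ≤ B ^ m * Q₂ := by
      calc G₂ ≤ ∏ p ∈ S, (B * ‖u p.2 - u p.1‖) := by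
            rw [hG2]
            exact Finset.prod_le_prod
              (fun p hp => norm_nonneg _)
              (fun p hp => (hb2 p hp).2)
      _ = B ^ S.card * Q₂ := by rw [Finset.prod_mul_distrib, Finset.prod_const, hQ2]
      _ ≤ B ^ m * Q₂ :=
            mul_le_mul_of_nonneg_right (pow_le_pow_right₀ hB1 hScard) hQ2nn
    have hG1nn : (0:ℝ) ≤ G₁ := by
      rw [hG1]; exact Finset.prod_nonneg fun p _ => norm_nonneg _
    have hG2nn : (0:ℝ) ≤ G₂ := by
      rw [hG2]; exact Finset.prod_nonneg fun p _ => norm_nonneg _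
    -- numerator
    have hdiag : ∏ i, ‖x i - u i‖ = ε ^ (k+1) * Pc := by
      have hterm : ∀ i : Fin (k+1), ‖x i - u i‖ = ε * |𝔠 i| := by
        intro i
        have hxi : x i - u i = ((ε * 𝔠 i : ℝ) : ℂ) := by simp only [hx]; ring
        rw [hxi, Complex.norm_real, Real.norm_eq_abs, abs_mul, abs_of_pos hε]
      rw [Finset.prod_congr rfl (fun i _ => hterm i), Finset.prod_mul_distrib,
        Finset.prod_const, Finset.card_univ, Fintype.card_fin, hPc]
    have hnum : ‖dprod x (fun j => -u j)‖ = (ε ^ (k+1) * Pc) * (G₁ * G₂) := by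
      have h0 : ‖dprod x (fun j => -u j)‖ =
          ∏ i, ∏ j, ‖x i - u j‖ := by
        simp only [dprod]
        rw [norm_prod]
        refine Finset.prod_congr rfl fun i _ => ?_
        rw [norm_prod]
        refine Finset.prod_congr rfl fun j _ => ?_
        rw [← sub_eq_add_neg]
      have h1 : ∏ i, ∏ j, ‖x i - u j‖ =
          (∏ i, ‖x i - u i‖) * (G₁ * G₂) := by
        rw [hG1, hG2, hS]
        exact prod_pair_split19 _
      rw [h0, h1, hdiag]
    -- denominator
    have hden1 : ‖vprod x‖ = Q₁ := by
      rw [hQ1, hS, vprod_eq19, norm_prod]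
    have hden2 : ‖vprod fun j => -u j‖ = Q₂ := by
      rw [hQ2, hS, vprod_eq19, norm_prod]
      exact Finset.prod_congr rfl fun p _ => by rw [neg_sub_neg]
    have habs : ‖dprod x (fun j => -u j) / (vprod x * vprod fun j => -u j)‖ =
        ((ε ^ (k+1) * Pc) * (G₁ * G₂)) / (Q₁ * Q₂) := by
      rw [norm_div, norm_mul, hnum, hden1, hden2]
    have hpow : (N:ℝ) ^ (-((k:ℝ) + 1) * ξ) = ε ^ (k+1) := by
      rw [hεdef, ← Real.rpow_natCast ((N:ℝ) ^ (-ξ)) (k+1), ← Real.rpow_mul hNpos.le]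
      congr 1
      push_cast
      ring
    have hQpos : 0 < Q₁ * Q₂ := mul_pos hQ1pos hQ2pos
    have hPε : (0:ℝ) ≤ ε ^ (k+1) * Pc := (mul_pos (pow_pos hε _) hPprodpos).le
    rw [habs, hpow]
    constructor
    · rw [le_div_iff₀ hQpos]
      calc Pc * (A ^ m * A ^ m) * ε ^ (k+1) * (Q₁ * Q₂)
          = (ε ^ (k+1) * Pc) * ((A ^ m * Q₁) * (A ^ m * Q₂)) := by ring
      _ ≤ (ε ^ (k+1) * Pc) * (G₁ * G₂) := by
          have h := mul_le_mul hG1_lo hG2_lo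
            (mul_nonneg (pow_nonneg hA0.le _) hQ2nn) hG1nn
          exact mul_le_mul_of_nonneg_left h hPε
    · rw [div_le_iff₀ hQpos]
      calc (ε ^ (k+1) * Pc) * (G₁ * G₂)
          ≤ (ε ^ (k+1) * Pc) * ((B ^ m * Q₁) * (B ^ m * Q₂)) := by
            have h := mul_le_mul hG1_hi hG2_hi hG2nn
              (mul_nonneg (pow_nonneg hB0 _) hQ1nn)
            exact mul_le_mul_of_nonneg_left h hPε
      _ = Pc * (B ^ m * B ^ m) * ε ^ (k+1) * (Q₁ * Q₂) := by ring
      _ ≤ (Pc * (B ^ m * B ^ m) + 1) * ε ^ (k+1) * (Q₁ * Q₂) := by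
            have hq1 : (0:ℝ) ≤ ε ^ (k+1) := pow_nonneg hε.le _
            have h : Pc * (B ^ m * B ^ m) ≤ Pc * (B ^ m * B ^ m) + 1 := by linarith
            exact mul_le_mul_of_nonneg_right (mul_le_mul_of_nonneg_right h hq1) hQpos.le
end
end
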